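/- Fix n ≥ 3 and α ∈ (0,1). Let T_n ~ q_{n,α}, let I be uniform on {1,…,n} and independent of T_n, and let Ĩ := max{I,a,b}, where a and b are the smallest leaf labels in the first and second subtrees on the path from leaf I to the root of T_n (b = 0 if only one subtree); Ĩ is the label removed in the down-move of the alpha chain. Then ℙ(Ĩ = ĩ) = (2ĩ − 2 − α)/(n(n − 1 − α)) for every 3 ≤ ĩ ≤ n, and ℙ(Ĩ = 2) = 2(1 − α)/(n(n − 1 − α)). In particular, for α = 1/2, ℙ(Ĩ = ĩ) = (4ĩ − 5)/(n(2n − 3)) for 3 ≤ ĩ ≤ n and ℙ(Ĩ = 2) = 2/(n(2n − 3)). -/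

import Mathlib

open scoped Classical

noncomputable section

/-- The label set `[n] = {1, …, n}`. -/
def lbl (n : ℕ) : Finset ℕ := Finset.Icc 1 n

/-- A rooted binary tree with leaves labeled by the finite set `A ⊆ ℕ`,
encoded as the collection of its edges, where each edge is identified with
the set of leaf labels in the subtree above it. -/
def IsLTree (A : Finset ℕ) (t : Finset (Finset ℕ)) : Prop :=
  (∀ B ∈ t, B ⊆ A ∧ B.Nonempty) ∧
  (∀ j ∈ A, ({j} : Finset ℕ) ∈ t) ∧
  (∀ B₁ ∈ t, ∀ B₂ ∈ t, B₁ ∩ B₂ = ∅ ∨ B₁ ⊆ B₂ ∨ B₂ ⊆ B₁) ∧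
  (∀ B ∈ t, B ≠ A → ∃! B', B' ∈ t ∧ B ∩ B' = ∅ ∧ B ∪ B' ∈ t)

/-- The space `𝕋_A` of rooted binary trees with leaves labeled by `A`. -/
def LTree (A : Finset ℕ) : Type := {t : Finset (Finset ℕ) // IsLTree A t}

noncomputable instance fintypeLTree (A : Finset ℕ) : Fintype (LTree A) := by
  have hfin : {t : Finset (Finset ℕ) | IsLTree A t}.Finite := by
    apply Set.Finite.subset (A.powerset.powerset).finite_toSet
    intro t ht
    have h : IsLTree A t := ht
    simp only [Finset.mem_coe, Finset.mem_powerset]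
    intro B hB
    exact Finset.mem_powerset.mpr (h.1 B hB).1
  exact hfin.fintype

/-- Insertion of a new leaf labeled `j` on the edge `S` of the tree `s`. -/
def insertLeaf (s : Finset (Finset ℕ)) (S : Finset ℕ) (j : ℕ) : Finset (Finset ℕ) :=
  (s.filter fun B => B ∩ S = ∅) ∪ (s.filter fun B => B ⊆ S) ∪
    ((s.filter fun B => S ⊆ B).image fun B => B ∪ {j}) ∪ {({j} : Finset ℕ)}

/-- Ford growth weight of an edge: `α` for internal edges, `1 - α` for external edges. -/
def fordWeight (α : ℝ) (B : Finset ℕ) : ℝ := if 2 ≤ B.card then α else 1 - α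

/-- Modified Ford growth weight: the external edge `{1}` gets weight `α` instead of `1 - α`. -/
def fordWeightT (α : ℝ) (B : Finset ℕ) : ℝ :=
  if 2 ≤ B.card ∨ B = ({1} : Finset ℕ) then α else 1 - α

/-- One step of Ford's alpha growth: probability that a tree with `m` leaves `s`
grows into `t` by insertion of the new leaf `m+1` at an edge chosen with probability
proportional to `1-α` (external) or `α` (internal). -/
def growStepF (α : ℝ) (m : ℕ) (s t : Finset (Finset ℕ)) : ℝ :=
  ∑ S ∈ s, if t = insertLeaf s S (m + 1) then
    fordWeight α S / (∑ S' ∈ s, fordWeight α S') else 0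

/-- One step of the modified Ford alpha growth (edge `{1}` has weight `α`). -/
def growStepFT (α : ℝ) (m : ℕ) (s t : Finset (Finset ℕ)) : ℝ :=
  ∑ S ∈ s, if t = insertLeaf s S (m + 1) then
    fordWeightT α S / (∑ S' ∈ s, fordWeightT α S') else 0

/-- `qF α m` is the law `q_{m,α}` of the `m`-th tree of Ford's alpha growth process. -/
def qF (α : ℝ) : (m : ℕ) → LTree (lbl m) → ℝ
  | 0, _ => 1
  | 1, _ => 1
  | 2, _ => 1
  | (m + 3), t => ∑ s : LTree (lbl (m + 2)), qF α (m + 2) s * growStepF α (m + 2) s.1 t.1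

/-- `qFT α m` is the law `q̃_{m,α}` of the `m`-th tree of the modified Ford alpha
growth process in which the external edge `{1}` is chosen with probability
proportional to `α` rather than `1-α`. -/
def qFT (α : ℝ) : (m : ℕ) → LTree (lbl m) → ℝ
  | 0, _ => 1
  | 1, _ => 1
  | 2, _ => 1
  | (m + 3), t => ∑ s : LTree (lbl (m + 2)), qFT α (m + 2) s * growStepFT α (m + 2) s.1 t.1

/-- Mass of `q_{m,α}` at an arbitrary edge collection (zero on non-trees). -/
def qMass (α : ℝ) (m : ℕ) (u : Finset (Finset ℕ)) : ℝ :=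
  if h : IsLTree (lbl m) u then qF α m ⟨u, h⟩ else 0

/-- Mass of `q̃_{m,α}` at an arbitrary edge collection (zero on non-trees). -/
def qMassT (α : ℝ) (m : ℕ) (u : Finset (Finset ℕ)) : ℝ :=
  if h : IsLTree (lbl m) u then qFT α m ⟨u, h⟩ else 0

/-- Mass of the uniform distribution on `𝕋_{[n]}`. -/
def unifMass (n : ℕ) : ℝ := 1 / (Fintype.card (LTree (lbl n)) : ℝ)

/-- Uniform mass at an arbitrary edge collection (zero on non-trees). -/
def unifTreeMass (c : ℕ) (u : Finset (Finset ℕ)) : ℝ :=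
  if IsLTree (lbl c) u then unifMass c else 0

/-- Smallest label in a finite label set (`0` if empty). -/
def minLbl (B : Finset ℕ) : ℕ := if h : B.Nonempty then B.min' h else 0

/-- The sibling edge of `B` in the tree `t`. -/
def sibling (t : Finset (Finset ℕ)) (B : Finset ℕ) : Finset ℕ :=
  if h : ∃ B', B' ∈ t ∧ B ∩ B' = ∅ ∧ B ∪ B' ∈ t then h.choose else ∅

/-- The parent edge of `B` in the tree `t`. -/
def parentEdge (t : Finset (Finset ℕ)) (B : Finset ℕ) : Finset ℕ := B ∪ sibling t B

/-- `ĩ = max {i, a, b}` where `a`, `b` are the smallest leaf labels in the first two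
subtrees on the ancestral path from leaf `i` to the root of `t ∈ 𝕋_A`
(`b = 0` if the path has only one subtree). -/
def tildeOf (A : Finset ℕ) (t : Finset (Finset ℕ)) (i : ℕ) : ℕ :=
  max i (max (minLbl (sibling t {i}))
    (if parentEdge t {i} = A then 0 else minLbl (sibling t (parentEdge t {i}))))

/-- Swap the leaf labels `i` and `j` in the tree `t`. -/
def swapTree (t : Finset (Finset ℕ)) (i j : ℕ) : Finset (Finset ℕ) :=
  t.image (Finset.image fun x => Equiv.swap i j x)

/-- Delete the leaf labeled `j` from the tree `t` (contracting its parent branch point). -/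
def delLeaf (t : Finset (Finset ℕ)) (j : ℕ) : Finset (Finset ℕ) :=
  (t.image fun B => B.erase j).erase ∅

/-- Down-move of the uniform chain starting from `t ∈ 𝕋_A` with selected leaf `i`:
swap labels `i` and `ĩ = max{i,a,b}` and delete the leaf now labeled `ĩ`. -/
def downUnif (A : Finset ℕ) (t : Finset (Finset ℕ)) (i : ℕ) : Finset (Finset ℕ) :=
  delLeaf (swapTree t i (tildeOf A t i)) (tildeOf A t i)

/-- Relabel all labels `> j` down by one. -/
def relabelGt (j : ℕ) (t : Finset (Finset ℕ)) : Finset (Finset ℕ) :=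
  t.image (Finset.image fun x => if j < x then x - 1 else x)

/-- Down-move of the alpha chain: after removing the leaf labeled `ĩ`, relabel the
leaves `ĩ+1, …, n` by `ĩ, …, n-1`. -/
def downAlpha (A : Finset ℕ) (t : Finset (Finset ℕ)) (i : ℕ) : Finset (Finset ℕ) :=
  relabelGt (tildeOf A t i) (downUnif A t i)

/-- Transition matrix of the uniform chain on `𝕋_{[n]}` (Definition 1.1):
uniform leaf selection, label-swapped deletion, uniform edge re-insertion of `ĩ`. -/
def PUnif (n : ℕ) (t t' : LTree (lbl n)) : ℝ :=
  (1 / (n : ℝ)) * ∑ i ∈ lbl n,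
    (1 / ((downUnif (lbl n) t.1 i).card : ℝ)) *
      ∑ S ∈ downUnif (lbl n) t.1 i,
        (if t'.1 = insertLeaf (downUnif (lbl n) t.1 i) S (tildeOf (lbl n) t.1 i) then 1 else 0)

/-- Transition matrix of the alpha chain on `𝕋_{[n]}` (Definition 2.4):
uniform leaf selection, label-swapped deletion with relabeling, and insertion of a new
leaf labeled `n` according to the alpha growth rule. -/
def PAlpha (α : ℝ) (n : ℕ) (t t' : LTree (lbl n)) : ℝ :=
  (1 / (n : ℝ)) * ∑ i ∈ lbl n, growStepF α (n - 1) (downAlpha (lbl n) t.1 i) t'.1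

/-- `t ∩ A`: the subtree of `t` spanned by the labels in `A`, reduced. -/
def restrictT (t : Finset (Finset ℕ)) (A : Finset ℕ) : Finset (Finset ℕ) :=
  (t.image fun B => B ∩ A).erase ∅

/-- The most recent ancestor edge of leaf `j` in `t` (including `{j}` itself)
that intersects the label set `A`. -/
def ancEdgeA (t : Finset (Finset ℕ)) (A : Finset ℕ) (j : ℕ) : Finset ℕ :=
  if h : (t.filter fun C => j ∈ C ∧ (C ∩ A).Nonempty).Nonempty then
    (t.filter fun C => j ∈ C ∧ (C ∩ A).Nonempty).inf' h id
  else ∅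

/-- The projection `π` sending a leaf `j` of `t` to an edge of `t ∩ A`. -/
def piProjA (t : Finset (Finset ℕ)) (A : Finset ℕ) (j : ℕ) : Finset ℕ := ancEdgeA t A j ∩ A

/-- Decorated trees: a tree shape together with a mass assignment on edges
(extended by zero off the shape). -/
abbrev DecoT : Type := Finset (Finset ℕ) × (Finset ℕ → ℕ)

/-- The decorated tree `ρ_A^{•(n)}(t)`: the reduced subtree `t ∩ A` with each edge
carrying the number of leaves of `t` projecting to it. -/
def rhoDecoA (n : ℕ) (A : Finset ℕ) (t : Finset (Finset ℕ)) : DecoT :=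
  (restrictT t A, fun B => ((lbl n).filter fun j => piProjA t A j = B).card)

/-- The decorated `k`-tree `ρ_k^{•(n)}(t)`. -/
def rhoDeco (n k : ℕ) (t : Finset (Finset ℕ)) : DecoT := rhoDecoA n (lbl k) t

/-- Collapsed trees: a tree shape together with a label-set assignment on edges. -/
abbrev StarT : Type := Finset (Finset ℕ) × (Finset ℕ → Finset ℕ)

/-- The collapsed `n`-tree with `k` leaves `ρ_k^{⋆(n)}(t)`. -/
def rhoStar (n k : ℕ) (t : Finset (Finset ℕ)) : StarT :=
  (restrictT t (lbl k), fun B => (lbl n).filter fun j => piProjA t (lbl k) j = B)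

/-- Replace each label set of a collapsed tree by its cardinality. -/
def starToDeco (ts : StarT) : DecoT := (ts.1, fun B => (ts.2 B).card)

/-- Membership in `𝕋_{[k]}^{•(n)}`: decorated `k`-trees with total mass `n`,
external masses at least 1, and mass vanishing off the shape. -/
def IsDeco (k n : ℕ) (d : DecoT) : Prop :=
  IsLTree (lbl k) d.1 ∧ (∀ B, B ∉ d.1 → d.2 B = 0) ∧ (∑ B ∈ d.1, d.2 B) = n ∧
    ∀ j ∈ lbl k, 1 ≤ d.2 {j}

/-- Edge mass of `ρ_k^{•(n)}(t)`. -/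
def massOf (n k : ℕ) (t : Finset (Finset ℕ)) (B : Finset ℕ) : ℕ := (rhoDeco n k t).2 B

/-- The urn counts of the decorated `k`-tree of `t`:
`x_i - 1` on external edges and `y_B` on internal edges. -/
def urnOf (n k : ℕ) (t : Finset (Finset ℕ)) : Finset ℕ → ℕ :=
  fun B => if B.card ≤ 1 then massOf n k t B - 1 else massOf n k t B

/-- Rising factorial `a^{(j)} = a (a+1) ⋯ (a+j-1)`. -/
def risingFac (a : ℝ) : ℕ → ℝ
  | 0 => 1
  | (j + 1) => risingFac a j * (a + j)

/-- Dirichlet-multinomial distribution `DM^β₃(m)` on triples summing to `m`, with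
parameters `(1-β, 1-β, β)`. -/
def dm3 (β : ℝ) (m j1 j2 j3 : ℕ) : ℝ :=
  if j1 + j2 + j3 = m then
    ((m.factorial : ℝ) / ((j1.factorial : ℝ) * (j2.factorial : ℝ) * (j3.factorial : ℝ))) *
      (risingFac (1 - β) j1 * risingFac (1 - β) j2 * risingFac β j3) / risingFac (2 - β) m
  else 0

/-- The decrement matrix `δ_α(N : m)` of the `(α,α)` regenerative composition. -/
def deltaAlpha (α : ℝ) (N m : ℕ) : ℝ :=
  α * (N.choose m : ℝ) * Real.Gamma ((m : ℝ) - α) * Real.Gamma ((N : ℝ) - (m : ℝ) + α) /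
    (Real.Gamma (1 - α) * Real.Gamma ((N : ℝ) + α))

/-- `δ(N : m) = δ_{1/2}(N : m)` in its binomial-coefficient form. -/
def deltaHalf (N m : ℕ) : ℝ :=
  (1 / (2 * (m : ℝ) - 1)) * (((2 * m).choose m : ℝ) *
    (((2 * N - 2 * m).choose (N - m)) : ℝ) / (((2 * N).choose N) : ℝ))

/-- Increase the mass of edge `C` by one. -/
def bumpD (d : DecoT) (C : Finset ℕ) : DecoT :=
  (d.1, fun B => if B = C then d.2 B + 1 else d.2 B)

/-- Decrease the mass of edge `C` by one. -/
def dropD (d : DecoT) (C : Finset ℕ) : DecoT :=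
  (d.1, fun B => if B = C then d.2 B - 1 else d.2 B)

/-- Up-move on decorated trees of total mass `m`: choose an edge with probability
`(x_j - α)/(m - α)` (external) or `(y_B + α)/(m - α)` (internal) and increase its
mass by one. -/
def upProb (α : ℝ) (m : ℕ) (d d' : DecoT) : ℝ :=
  ∑ C ∈ d.1,
    ((if 2 ≤ C.card then (d.2 C : ℝ) + α else (d.2 C : ℝ) - α) / ((m : ℝ) - α)) *
      (if d' = bumpD d C then 1 else 0)

/-- Case (B) mass reshuffle: set the mass of external edge `B` to `m` and reduce the
mass of its parent by `m`. -/
def caseBD (d : DecoT) (B : Finset ℕ) (m : ℕ) : DecoT :=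
  (d.1, fun C => if C = B then m else if C = parentEdge d.1 B then d.2 C - m else d.2 C)

/-- Restrict a mass function to a shape (zero off the shape). -/
def restrictF (s : Finset (Finset ℕ)) (f : Finset ℕ → ℕ) : Finset ℕ → ℕ :=
  fun B => if B ∈ s then f B else 0

/-- Insert leaf `j` on the external edge `{c}` of the decorated tree `(s, f)`, splitting
the mass of `{c}` as `x_c := j1+1`, `x_j := j2+1`, `y_{{c,j}} := j3`. -/
def insDecoExt (s : Finset (Finset ℕ)) (f : Finset ℕ → ℕ) (c j j1 j2 j3 : ℕ) : DecoT :=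
  (insertLeaf s {c} j,
    restrictF (insertLeaf s {c} j) fun B =>
      if B = ({c} : Finset ℕ) then j1 + 1 else if B = ({j} : Finset ℕ) then j2 + 1
      else if B = ({c, j} : Finset ℕ) then j3
      else if j ∈ B then f (B.erase j) else f B)

/-- Insert leaf `j` on the internal edge `C` of the decorated tree `(s, f)`, splitting
the mass of `C` as `y_{C∪{j}} := j1`, `y_C := j2`, `x_j := j3+1`. -/
def insDecoInt (s : Finset (Finset ℕ)) (f : Finset ℕ → ℕ) (C : Finset ℕ)
    (j j1 j2 j3 : ℕ) : DecoT :=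
  (insertLeaf s C j,
    restrictF (insertLeaf s C j) fun B =>
      if B = C ∪ {j} then j1 else if B = C then j2 else if B = ({j} : Finset ℕ) then j3 + 1
      else if j ∈ B then f (B.erase j) else f B)

/-- Inserting the label `j` into a decorated tree (Definition 4.2), with edge-selection
normalizer `M`: an external edge `{i}` is selected with probability `(x_i - 1)/M` and
its mass split via `DM^α₃(x_i - 2)`; an internal edge `B` is selected with probability
`y_B/M` and its mass split via `DM^{1-α}₃(y_B - 1)`. -/
def insProb (α : ℝ) (M : ℕ) (j : ℕ) (d d' : DecoT) : ℝ :=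
  ∑ C ∈ d.1,
    if 2 ≤ C.card then
      ((d.2 C : ℝ) / (M : ℝ)) *
        ∑ a ∈ Finset.range (d.2 C), ∑ b ∈ Finset.range (d.2 C),
          dm3 (1 - α) (d.2 C - 1) a b (d.2 C - 1 - a - b) *
            (if d' = insDecoInt d.1 d.2 C j a b (d.2 C - 1 - a - b) then 1 else 0)
    else
      (((d.2 C : ℝ) - 1) / (M : ℝ)) *
        ∑ a ∈ Finset.range (d.2 C), ∑ b ∈ Finset.range (d.2 C),
          dm3 α (d.2 C - 2) a b (d.2 C - 2 - a - b) *
            (if d' = insDecoExt d.1 d.2 (minLbl C) j a b (d.2 C - 2 - a - b) then 1 else 0)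

/-- Steps (iii)-(v) of resampling the label `i` (Definition 4.4) into a decorated tree of
total mass `n-1` (`n` being the total mass before the drop): choose an edge with
probability `(x_j - 1/2)/(n - 3/2)` (external) or `(y_B + 1/2)/(n - 3/2)` (internal) and
insert leaf `i` there, splitting the increased mass via `DM^{1/2}₃`. -/
def resampProb (n : ℕ) (i : ℕ) (d d' : DecoT) : ℝ :=
  ∑ C ∈ d.1,
    if 2 ≤ C.card then
      (((d.2 C : ℝ) + 1 / 2) / ((n : ℝ) - 3 / 2)) *
        ∑ a ∈ Finset.range (d.2 C + 1), ∑ b ∈ Finset.range (d.2 C + 1),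
          dm3 (1 / 2) (d.2 C) a b (d.2 C - a - b) *
            (if d' = insDecoInt d.1 d.2 C i a b (d.2 C - a - b) then 1 else 0)
    else
      (((d.2 C : ℝ) - 1 / 2) / ((n : ℝ) - 3 / 2)) *
        ∑ a ∈ Finset.range (d.2 C), ∑ b ∈ Finset.range (d.2 C),
          dm3 (1 / 2) (d.2 C - 1) a b (d.2 C - 1 - a - b) *
            (if d' = insDecoExt d.1 d.2 (minLbl C) i a b (d.2 C - 1 - a - b) then 1 else 0)

/-- Swap labels `i` and `j` in a decorated tree. -/
def swapD (d : DecoT) (i j : ℕ) : DecoT :=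
  (d.1.image (Finset.image fun x => Equiv.swap i j x),
    fun C => d.2 (C.image fun x => Equiv.swap i j x))

/-- Case (C) of the uniform decorated chain: swap `i = min B` with `ĩ`, delete leaf `ĩ`
(with its mass 1 and parent mass 0) and resample `ĩ`. -/
def caseCUnif (n k : ℕ) (d : DecoT) (B : Finset ℕ) (d' : DecoT) : ℝ :=
  resampProb n (tildeOf (lbl k) d.1 (minLbl B))
    (delLeaf (swapD d (minLbl B) (tildeOf (lbl k) d.1 (minLbl B))).1
        (tildeOf (lbl k) d.1 (minLbl B)),
      restrictF (delLeaf (swapD d (minLbl B) (tildeOf (lbl k) d.1 (minLbl B))).1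
          (tildeOf (lbl k) d.1 (minLbl B)))
        fun C => (swapD d (minLbl B) (tildeOf (lbl k) d.1 (minLbl B))).2 C +
          (swapD d (minLbl B) (tildeOf (lbl k) d.1 (minLbl B))).2
            (C ∪ {tildeOf (lbl k) d.1 (minLbl B)}))
    d'

/-- Transition matrix of the uniform decorated chain on `𝕋_{[k]}^{•(n)}`
(Definition 4.6). -/
def RUnif (n k : ℕ) (d d' : DecoT) : ℝ :=
  ∑ B ∈ d.1,
    ((d.2 B : ℝ) / (n : ℝ)) *
      (if 2 ≤ B.card ∨ 2 ≤ d.2 B then upProb (1 / 2) (n - 1) (dropD d B) d'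
       else if 0 < d.2 (parentEdge d.1 B) then
         ∑ m ∈ Finset.Icc 1 (d.2 (parentEdge d.1 B)),
           deltaHalf (d.2 (parentEdge d.1 B)) m * upProb (1 / 2) (n - 1) (caseBD d B m) d'
       else caseCUnif n k d B d')

/-- Insertion of label `j` followed by an up-move (used in case (C) of the alpha
decorated chain). -/
def insThenUp (α : ℝ) (n k j : ℕ) (d : DecoT) (d' : DecoT) : ℝ :=
  ∑ C ∈ d.1,
    if 2 ≤ C.card then
      ((d.2 C : ℝ) / ((n : ℝ) - (k : ℝ))) *
        ∑ a ∈ Finset.range (d.2 C), ∑ b ∈ Finset.range (d.2 C),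
          dm3 (1 - α) (d.2 C - 1) a b (d.2 C - 1 - a - b) *
            upProb α (n - 1) (insDecoInt d.1 d.2 C j a b (d.2 C - 1 - a - b)) d'
    else
      (((d.2 C : ℝ) - 1) / ((n : ℝ) - (k : ℝ))) *
        ∑ a ∈ Finset.range (d.2 C), ∑ b ∈ Finset.range (d.2 C),
          dm3 α (d.2 C - 2) a b (d.2 C - 2 - a - b) *
            upProb α (n - 1) (insDecoExt d.1 d.2 (minLbl C) j a b (d.2 C - 2 - a - b)) d'

/-- Dropping the label `it` from a decorated tree (Definition 4.1): delete leaf `it`,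
discard its mass and its parent's mass, and relabel the labels `> it` down by one. -/
def dropLabelD (d : DecoT) (it : ℕ) : DecoT :=
  ((delLeaf d.1 it).image (Finset.image fun x => if it < x then x - 1 else x),
    restrictF ((delLeaf d.1 it).image (Finset.image fun x => if it < x then x - 1 else x))
      fun C =>
        restrictF (delLeaf d.1 it) (fun C' => d.2 C' + d.2 (C' ∪ {it}))
          (C.image fun x => if it ≤ x then x + 1 else x))

/-- Case (C) of the alpha decorated chain: swap, drop the label `ĩ` (with relabeling),
insert the label `k` and perform an up-move. -/
def caseCAlpha (α : ℝ) (n k : ℕ) (d : DecoT) (B : Finset ℕ) (d' : DecoT) : ℝ :=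
  insThenUp α n k k
    (dropLabelD (swapD d (minLbl B) (tildeOf (lbl k) d.1 (minLbl B)))
      (tildeOf (lbl k) d.1 (minLbl B))) d'

/-- Transition matrix of the alpha decorated chain on `𝕋_{[k]}^{•(n)}`
(Definition 4.7). -/
def RAlpha (α : ℝ) (n k : ℕ) (d d' : DecoT) : ℝ :=
  ∑ B ∈ d.1,
    ((d.2 B : ℝ) / (n : ℝ)) *
      (if 2 ≤ B.card ∨ 2 ≤ d.2 B then upProb α (n - 1) (dropD d B) d'
       else if 0 < d.2 (parentEdge d.1 B) then
         ∑ m ∈ Finset.Icc 1 (d.2 (parentEdge d.1 B)),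
           deltaAlpha α (d.2 (parentEdge d.1 B)) m * upProb α (n - 1) (caseBD d B m) d'
       else caseCAlpha α n k d B d')

/-- The sub-probability transition matrix of the alpha decorated chain restricted to
moves that do not use case (C). -/
def RAlphaNoC (α : ℝ) (n k : ℕ) (d d' : DecoT) : ℝ :=
  ∑ B ∈ d.1,
    ((d.2 B : ℝ) / (n : ℝ)) *
      (if 2 ≤ B.card ∨ 2 ≤ d.2 B then upProb α (n - 1) (dropD d B) d'
       else if 0 < d.2 (parentEdge d.1 B) then
         ∑ m ∈ Finset.Icc 1 (d.2 (parentEdge d.1 B)),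
           deltaAlpha α (d.2 (parentEdge d.1 B)) m * upProb α (n - 1) (caseBD d B m) d'
       else 0)

/-- Probability that the next transition of the alpha decorated chain uses case (C)
and drops the label `it`. -/
def probDropC (n k : ℕ) (d : DecoT) (it : ℕ) : ℝ :=
  ∑ B ∈ d.1,
    if ¬(2 ≤ B.card ∨ 2 ≤ d.2 B) ∧ d.2 (parentEdge d.1 B) = 0 ∧
        tildeOf (lbl k) d.1 (minLbl B) = it then (d.2 B : ℝ) / (n : ℝ)
    else 0

/-- Rank (1-based) of `a` within the finite label set `A`. -/
def rankIn (A : Finset ℕ) (a : ℕ) : ℕ := (A.filter fun x => x ≤ a).card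

/-- Relabel the labels appearing in `u` by their ranks within `A`. -/
def relabelRank (A : Finset ℕ) (u : Finset (Finset ℕ)) : Finset (Finset ℕ) :=
  u.image (Finset.image (rankIn A))

/-- The label set `π^{-1}(B)` of leaves of `t` projecting to the edge `B` of `t ∩ [k]`. -/
def preimLbl (n k : ℕ) (t : Finset (Finset ℕ)) (B : Finset ℕ) : Finset ℕ :=
  (lbl n).filter fun j => piProjA t (lbl k) j = B

/-- The lowest edge of `t` mapping onto the edge `B` of `t ∩ [k]`. -/
def bottomEdge (k : ℕ) (t : Finset (Finset ℕ)) (B : Finset ℕ) : Finset ℕ :=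
  if h : (t.filter fun C => C ∩ lbl k = B).Nonempty then
    (t.filter fun C => C ∩ lbl k = B).inf' h id
  else ∅

/-- The internal structure `int(V_B)` of `ρ_k^{•(n)}(t)` supported on the edge `B` of
`t ∩ [k]`: the subtree of `t` collapsing to `B`, with the vertex corresponding to `B`
turned into a leaf labeled `1` if `B` is internal, all leaves relabeled by ranks. -/
def intStruct (n k : ℕ) (t : Finset (Finset ℕ)) (B : Finset ℕ) : Finset (Finset ℕ) :=
  if 2 ≤ B.card then
    relabelRank (insert 0 (preimLbl n k t B))
      ((t.image fun C =>
        (C ∩ preimLbl n k t B) ∪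
          (if (C ∩ bottomEdge k t B).Nonempty then ({0} : Finset ℕ) else ∅)).erase ∅)
  else
    relabelRank (preimLbl n k t B) ((t.image fun C => C ∩ preimLbl n k t B).erase ∅)

/-- The kernel `Λ(𝐭⋆, ·) = q_{n,1/2}( · ∣ ρ_k^{⋆(n)} = 𝐭⋆)`. -/
def LamStar (n k : ℕ) (ts : StarT) (t : LTree (lbl n)) : ℝ :=
  (unifMass n * (if rhoStar n k t.1 = ts then 1 else 0)) /
    (∑ t' : LTree (lbl n), unifMass n * (if rhoStar n k t'.1 = ts then 1 else 0))

/-- The induced transition matrix `K = Λ P ρ_k^{⋆(n)}` on collapsed trees. -/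
def KColl (n k : ℕ) (ts ts' : StarT) : ℝ :=
  ∑ t : LTree (lbl n), LamStar n k ts t *
    (∑ t'' : LTree (lbl n), PUnif n t t'' * (if rhoStar n k t''.1 = ts' then 1 else 0))

/-- The set `𝕋_{[k]}^{⋆(n)}` of collapsed `n`-trees with `k` leaves. -/
def allStar (n k : ℕ) : Finset StarT :=
  (Finset.univ : Finset (LTree (lbl n))).image fun t => rhoStar n k t.1

/-- The set `𝕋_{[k]}^{•(n)}` of decorated `k`-trees arising from `n`-trees. -/
def allDeco (n k : ℕ) : Finset DecoT :=
  (Finset.univ : Finset (LTree (lbl n))).image fun t => rhoDeco n k t.1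

/-- The kernel `Λ^{(α)}(𝐭•, ·) = q_{n,α}( · ∣ ρ_k^{•(n)} = 𝐭•)`. -/
def LamDeco (α : ℝ) (n k : ℕ) (d : DecoT) (t : LTree (lbl n)) : ℝ :=
  (qF α n t * (if rhoDeco n k t.1 = d then 1 else 0)) /
    (∑ t' : LTree (lbl n), qF α n t' * (if rhoDeco n k t'.1 = d then 1 else 0))

/-- Update rule of the generalized Pólya urn. -/
def bumpF (c : Finset ℕ → ℕ) (B : Finset ℕ) : Finset ℕ → ℕ :=
  fun C => if C = B then c C + 1 else c C

/-- One step of the generalized Pólya urn with colors the edges of `s`, in which color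
`B` is selected with probability proportional to `(1-α) + c B` (external) or
`α + c B` (internal). -/
def urnStep (α : ℝ) (s : Finset (Finset ℕ)) (c c' : Finset ℕ → ℕ) : ℝ :=
  ∑ B ∈ s, ((fordWeight α B + (c B : ℝ)) / (∑ B' ∈ s, (fordWeight α B' + (c B' : ℝ)))) *
    (if c' = bumpF c B then 1 else 0)

end

noncomputable section Helpers

lemma inter_empty_iff {s t : Finset ℕ} : s ∩ t = ∅ ↔ ∀ a ∈ s, a ∉ t := by
  simp [← Finset.disjoint_iff_inter_eq_empty, Finset.disjoint_left]

namespace IsLTree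

variable {A : Finset ℕ} {t : Finset (Finset ℕ)}

lemma subset_of_mem (ht : IsLTree A t) {B} (hB : B ∈ t) : B ⊆ A := (ht.1 B hB).1

lemma nonempty_of_mem (ht : IsLTree A t) {B} (hB : B ∈ t) : B.Nonempty := (ht.1 B hB).2

lemma singleton_mem (ht : IsLTree A t) {j} (hj : j ∈ A) : ({j} : Finset ℕ) ∈ t := ht.2.1 j hj

lemma laminar (ht : IsLTree A t) {B₁ B₂} (h1 : B₁ ∈ t) (h2 : B₂ ∈ t) :
    B₁ ∩ B₂ = ∅ ∨ B₁ ⊆ B₂ ∨ B₂ ⊆ B₁ := ht.2.2.1 B₁ h1 B₂ h2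

lemma sib_exu (ht : IsLTree A t) {B} (hB : B ∈ t) (hne : B ≠ A) :
    ∃! B', B' ∈ t ∧ B ∩ B' = ∅ ∧ B ∪ B' ∈ t := ht.2.2.2 B hB hne

lemma root_mem (ht : IsLTree A t) (hA : A.Nonempty) : A ∈ t := by
  obtain ⟨a, ha⟩ := hA
  have hne : t.Nonempty := ⟨{a}, ht.singleton_mem ha⟩
  obtain ⟨M, hM, hmax⟩ := t.exists_maximal hne
  by_contra hAt
  have hMA : M ≠ A := fun h => hAt (h ▸ hM)
  obtain ⟨B', hB'⟩ := (ht.sib_exu hM hMA).exists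
  obtain ⟨b, hb⟩ := ht.nonempty_of_mem hB'.1
  refine (fun (hy : M ∪ B' ∈ t) (hlt : M < M ∪ B') => lt_irrefl _ (lt_of_lt_of_le hlt (hmax hy hlt.le))) hB'.2.2 ?_
  refine Finset.lt_iff_ssubset.mpr ⟨Finset.subset_union_left, fun hsub => ?_⟩
  have : b ∈ M := hsub (Finset.mem_union_right _ hb)
  have : b ∈ M ∩ B' := Finset.mem_inter.mpr ⟨this, hb⟩
  rw [hB'.2.1] at this
  exact absurd this (Finset.notMem_empty _)

lemma sibling_eq (ht : IsLTree A t) {B B'} (hB : B ∈ t) (hne : B ≠ A)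
    (h1 : B' ∈ t) (h2 : B ∩ B' = ∅) (h3 : B ∪ B' ∈ t) : sibling t B = B' := by
  have hex : ∃ C, C ∈ t ∧ B ∩ C = ∅ ∧ B ∪ C ∈ t := ⟨B', h1, h2, h3⟩
  rw [sibling, dif_pos hex]
  exact (ht.sib_exu hB hne).unique hex.choose_spec ⟨h1, h2, h3⟩

lemma sibling_spec (ht : IsLTree A t) {B} (hB : B ∈ t) (hne : B ≠ A) :
    sibling t B ∈ t ∧ B ∩ sibling t B = ∅ ∧ B ∪ sibling t B ∈ t := by
  obtain ⟨B', hB'⟩ := (ht.sib_exu hB hne).exists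
  rw [ht.sibling_eq hB hne hB'.1 hB'.2.1 hB'.2.2]
  exact hB'

end IsLTree

lemma sibling_mem_or_empty (t : Finset (Finset ℕ)) (B : Finset ℕ) :
    sibling t B ∈ t ∨ sibling t B = ∅ := by
  rw [sibling]
  split
  · rename_i h
    exact Or.inl h.choose_spec.1
  · exact Or.inr rfl

lemma sibling_sub {A : Finset ℕ} {t : Finset (Finset ℕ)} (ht : IsLTree A t) (B : Finset ℕ) :
    sibling t B ⊆ A := by
  rcases sibling_mem_or_empty t B with h | h
  · exact ht.subset_of_mem h
  · simp [h]

lemma minLbl_le {B : Finset ℕ} {M : ℕ} (h : ∀ x ∈ B, x ≤ M) : minLbl B ≤ M := by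
  rw [minLbl]
  split
  · exact h _ (Finset.min'_mem _ _)
  · exact Nat.zero_le M

lemma minLbl_singleton (j : ℕ) : minLbl {j} = j := by simp [minLbl]

lemma minLbl_union_singleton {B : Finset ℕ} {j : ℕ} (hB : B.Nonempty) (h : ∀ x ∈ B, x < j) :
    minLbl (B ∪ {j}) = minLbl B := by
  have hne : (B ∪ {j}).Nonempty := hB.mono Finset.subset_union_left
  simp only [minLbl, dif_pos hB, dif_pos hne]
  have h1 : (B ∪ {j}).min' hne ≤ B.min' hB :=
    Finset.min'_le _ _ (Finset.mem_union_left _ (B.min'_mem hB))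
  refine le_antisymm h1 ?_
  have hc := (B ∪ {j}).min'_mem hne
  rcases Finset.mem_union.mp hc with hcB | hcj
  · exact Finset.min'_le _ _ hcB
  · exfalso
    have : (B ∪ {j}).min' hne = j := Finset.mem_singleton.mp hcj
    have h2 := h _ (B.min'_mem hB)
    omega

lemma mem_lbl {m x : ℕ} : x ∈ lbl m ↔ 1 ≤ x ∧ x ≤ m := by simp [lbl]

lemma tildeOf_le {A : Finset ℕ} {t : Finset (Finset ℕ)} {M i : ℕ} (ht : IsLTree A t)
    (hA : ∀ x ∈ A, x ≤ M) (hi : i ≤ M) : tildeOf A t i ≤ M := by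
  have hsub : ∀ B : Finset ℕ, B ⊆ A → minLbl B ≤ M := fun B hsubB =>
    minLbl_le (fun x hx => hA x (hsubB hx))
  refine max_le hi (max_le (hsub _ (sibling_sub ht _)) ?_)
  split
  · exact Nat.zero_le M
  · exact hsub _ (sibling_sub ht _)

lemma union_singleton_eq (s : Finset ℕ) (a : ℕ) : s ∪ {a} = insert a s := by
  ext x
  simp [Finset.mem_union, or_comm]

lemma union_singleton_inj {C D : Finset ℕ} {j : ℕ} (hC : j ∉ C) (hD : j ∉ D)
    (h : C ∪ {j} = D ∪ {j}) : C = D := by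
  have h' : insert j C = insert j D := by
    rw [union_singleton_eq, union_singleton_eq] at h
    exact h
  have := congrArg (fun s => Finset.erase s j) h'
  simpa [Finset.erase_insert hC, Finset.erase_insert hD] using this

lemma mem_insertLeaf {t : Finset (Finset ℕ)} {S B : Finset ℕ} {j : ℕ} :
    B ∈ insertLeaf t S j ↔
      (B ∈ t ∧ (B ∩ S = ∅ ∨ B ⊆ S)) ∨ (∃ C, C ∈ t ∧ S ⊆ C ∧ B = C ∪ {j}) ∨ B = {j} := by
  simp only [insertLeaf, Finset.mem_union, Finset.mem_filter, Finset.mem_image,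
    Finset.mem_singleton]
  constructor
  · rintro (((⟨h1, h2⟩ | ⟨h1, h2⟩) | ⟨C, ⟨hC, hSC⟩, rfl⟩) | h)
    · exact Or.inl ⟨h1, Or.inl h2⟩
    · exact Or.inl ⟨h1, Or.inr h2⟩
    · exact Or.inr (Or.inl ⟨C, hC, hSC, rfl⟩)
    · exact Or.inr (Or.inr h)
  · rintro (⟨h1, h2 | h2⟩ | ⟨C, hC, hSC, rfl⟩ | h)
    · exact Or.inl (Or.inl (Or.inl ⟨h1, h2⟩))
    · exact Or.inl (Or.inl (Or.inr ⟨h1, h2⟩))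
    · exact Or.inl (Or.inr ⟨C, ⟨hC, hSC⟩, rfl⟩)
    · exact Or.inr h

lemma insertLeaf_isLTree {A : Finset ℕ} {t : Finset (Finset ℕ)} {S : Finset ℕ} {j : ℕ}
    (ht : IsLTree A t) (hS : S ∈ t) (hj : j ∉ A) :
    IsLTree (insert j A) (insertLeaf t S j) := by
  set u := insertLeaf t S j with hu
  have hjB : ∀ {B}, B ∈ t → j ∉ B := fun {B} hB hjB => hj (ht.subset_of_mem hB hjB)
  have hSne : S.Nonempty := ht.nonempty_of_mem hS
  have hmem_tu : ∀ {B}, B ∈ t → (B ∩ S = ∅ ∨ B ⊆ S) → B ∈ u := fun {B} h1 h2 =>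
    mem_insertLeaf.mpr (Or.inl ⟨h1, h2⟩)
  have hmem_img : ∀ {C}, C ∈ t → S ⊆ C → C ∪ {j} ∈ u := fun {C} h1 h2 =>
    mem_insertLeaf.mpr (Or.inr (Or.inl ⟨C, h1, h2, rfl⟩))
  have hmem_j : ({j} : Finset ℕ) ∈ u := mem_insertLeaf.mpr (Or.inr (Or.inr rfl))
  have hext_noj : ∀ {B}, B ∈ u → j ∉ B → B ∈ t ∧ (B ∩ S = ∅ ∨ B ⊆ S) := by
    intro B hB hjB'
    rcases mem_insertLeaf.mp hB with h | ⟨C, hC, hSC, rfl⟩ | rfl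
    · exact h
    · exact absurd (Finset.mem_union_right _ (Finset.mem_singleton_self j)) hjB'
    · exact absurd (Finset.mem_singleton_self j) hjB'
  have hext_j : ∀ {B}, B ∈ u → j ∈ B → B ≠ {j} → ∃ C, C ∈ t ∧ S ⊆ C ∧ B = C ∪ {j} := by
    intro B hB hjB' hne
    rcases mem_insertLeaf.mp hB with ⟨h1, _⟩ | h | rfl
    · exact absurd hjB' (hjB h1)
    · exact h
    · exact absurd rfl hne
  have hne_j : ∀ {B X : Finset ℕ}, B.Nonempty → j ∉ B → B ∪ X ≠ {j} := by
    rintro B X ⟨b, hb⟩ hjB' he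
    have : b ∈ ({j} : Finset ℕ) := he ▸ Finset.mem_union_left _ hb
    exact hjB' ((Finset.mem_singleton.mp this) ▸ hb)
  have cond1 : ∀ B ∈ u, B ⊆ insert j A ∧ B.Nonempty := by
    intro B hB
    rcases mem_insertLeaf.mp hB with ⟨h1, _⟩ | ⟨C, hC, _, rfl⟩ | rfl
    · exact ⟨(ht.subset_of_mem h1).trans (Finset.subset_insert _ _), ht.nonempty_of_mem h1⟩
    · refine ⟨Finset.union_subset ((ht.subset_of_mem hC).trans (Finset.subset_insert _ _))
        (by simp), (ht.nonempty_of_mem hC).mono Finset.subset_union_left⟩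
    · exact ⟨by simp, ⟨j, Finset.mem_singleton_self j⟩⟩
  have cond2 : ∀ i ∈ insert j A, ({i} : Finset ℕ) ∈ u := by
    intro i hi
    rcases Finset.mem_insert.mp hi with rfl | hiA
    · exact hmem_j
    · refine hmem_tu (ht.singleton_mem hiA) ?_
      rcases ht.laminar (ht.singleton_mem hiA) hS with h | h | h
      · exact Or.inl h
      · exact Or.inr h
      · rcases Finset.subset_singleton_iff.mp h with h' | h'
        · exact absurd h' (Finset.nonempty_iff_ne_empty.mp hSne)
        · exact Or.inr (h' ▸ Finset.Subset.refl _)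
  have cond3 : ∀ B₁ ∈ u, ∀ B₂ ∈ u, B₁ ∩ B₂ = ∅ ∨ B₁ ⊆ B₂ ∨ B₂ ⊆ B₁ := by
    have mixed : ∀ {B C : Finset ℕ}, B ∈ t → (B ∩ S = ∅ ∨ B ⊆ S) → C ∈ t → S ⊆ C →
        B ∩ (C ∪ {j}) = ∅ ∨ B ⊆ C ∪ {j} ∨ (C ∪ {j}) ⊆ B := by
      intro B C hB hBS hC hSC
      rcases ht.laminar hB hC with h | h | h
      · left
        rw [inter_empty_iff] at h ⊢
        intro a haB
        simp only [Finset.mem_union, Finset.mem_singleton]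
        push_neg
        exact ⟨h a haB, fun he => hjB hB (he ▸ haB)⟩
      · exact Or.inr (Or.inl (h.trans Finset.subset_union_left))
      · have hSB : S ⊆ B := hSC.trans h
        have hBeq : B = S := by
          rcases hBS with h' | h'
          · exfalso
            obtain ⟨x, hx⟩ := hSne
            exact (inter_empty_iff.mp h') x (hSB hx) hx
          · exact Finset.Subset.antisymm h' hSB
        have hCeq : C = S := Finset.Subset.antisymm (hBeq ▸ h) hSC
        exact Or.inr (Or.inl (by rw [hBeq, ← hCeq]; exact Finset.subset_union_left))
    intro B₁ hB₁ B₂ hB₂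
    rcases mem_insertLeaf.mp hB₁ with ⟨h1, h1'⟩ | ⟨C₁, hC₁, hSC₁, rfl⟩ | rfl
    · rcases mem_insertLeaf.mp hB₂ with ⟨h2, h2'⟩ | ⟨C₂, hC₂, hSC₂, rfl⟩ | rfl
      · exact ht.laminar h1 h2
      · exact mixed h1 h1' hC₂ hSC₂
      · left
        rw [inter_empty_iff]
        intro a ha
        rw [Finset.mem_singleton]
        exact fun he => hjB h1 (he ▸ ha)
    · rcases mem_insertLeaf.mp hB₂ with ⟨h2, h2'⟩ | ⟨C₂, hC₂, hSC₂, rfl⟩ | rfl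
      · rcases mixed h2 h2' hC₁ hSC₁ with h | h | h
        · exact Or.inl (by rw [Finset.inter_comm]; exact h)
        · exact Or.inr (Or.inr h)
        · exact Or.inr (Or.inl h)
      · have hne : (C₁ ∩ C₂).Nonempty := hSne.mono (Finset.subset_inter hSC₁ hSC₂)
        rcases ht.laminar hC₁ hC₂ with h | h | h
        · exact absurd (h ▸ hne) (by simp)
        · exact Or.inr (Or.inl (Finset.union_subset_union_left h))
        · exact Or.inr (Or.inr (Finset.union_subset_union_left h))
      · exact Or.inr (Or.inr Finset.subset_union_right)
    · rcases mem_insertLeaf.mp hB₂ with ⟨h2, h2'⟩ | ⟨C₂, hC₂, hSC₂, rfl⟩ | rfl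
      · left
        rw [inter_empty_iff]
        intro a ha
        rw [Finset.mem_singleton] at ha
        exact fun h' => hjB h2 (ha ▸ h')
      · exact Or.inr (Or.inl Finset.subset_union_right)
      · exact Or.inr (Or.inl (Finset.Subset.refl _))
  have cond4 : ∀ B ∈ u, B ≠ insert j A → ∃! B', B' ∈ u ∧ B ∩ B' = ∅ ∧ B ∪ B' ∈ u := by
    intro B hB hBroot
    rcases mem_insertLeaf.mp hB with ⟨hBt, hBcond⟩ | ⟨C₀, hC₀, hSC₀, rfl⟩ | rfl
    · -- `B` is an old edge of `t`
      by_cases hBA : B = A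
      · -- the old root; then S = A and the sibling is {j}
        subst hBA
        have hSA : S = B := by
          rcases hBcond with h | h
          · exfalso
            obtain ⟨x, hx⟩ := hSne
            exact (inter_empty_iff.mp h) x (ht.subset_of_mem hS hx) hx
          · exact Finset.Subset.antisymm (ht.subset_of_mem hS) h
        refine ⟨{j}, ⟨hmem_j, ?_, ?_⟩, ?_⟩
        · rw [inter_empty_iff]
          intro a ha
          rw [Finset.mem_singleton]
          exact fun he => hj (he ▸ ha)
        · exact hmem_img (hSA ▸ hS) (hSA ▸ Finset.Subset.refl S)
        · rintro y ⟨hy, hdisj, -⟩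
          obtain ⟨hy1, hy2⟩ := cond1 y hy
          have hall : ∀ x ∈ y, x = j := by
            intro x hx
            rcases Finset.mem_insert.mp (hy1 hx) with h | h
            · exact h
            · exact absurd hx ((inter_empty_iff.mp hdisj) x h)
          obtain ⟨x₀, hx₀⟩ := hy2
          exact Finset.eq_singleton_iff_unique_mem.mpr ⟨(hall x₀ hx₀) ▸ hx₀, hall⟩
      · by_cases hBS : B = S
        · -- B = S; the sibling is {j}
          subst hBS
          refine ⟨{j}, ⟨hmem_j, ?_, ?_⟩, ?_⟩
          · rw [inter_empty_iff]
            intro a ha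
            rw [Finset.mem_singleton]
            exact fun he => hjB hBt (he ▸ ha)
          · exact hmem_img hBt (Finset.Subset.refl _)
          · rintro y ⟨hy, hdisj, huny⟩
            by_cases hjy : j ∈ y
            · rcases mem_insertLeaf.mp hy with ⟨h1, _⟩ | ⟨D, hD, hSD, rfl⟩ | rfl
              · exact absurd hjy (hjB h1)
              · exfalso
                obtain ⟨x, hx⟩ := hSne
                exact (inter_empty_iff.mp hdisj) x hx
                  (Finset.mem_union_left _ (hSD hx))
              · rfl
            · exfalso
              obtain ⟨hyt, -⟩ := hext_noj hy hjy
              have hyne := ht.nonempty_of_mem hyt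
              have h3 := hext_noj huny (by
                simp only [Finset.mem_union, not_or]
                exact ⟨hjB hBt, hjy⟩)
              rcases h3.2 with h' | h'
              · obtain ⟨x, hx⟩ := hSne
                exact (inter_empty_iff.mp h') x (Finset.mem_union_left _ hx) hx
              · have hyB : y ⊆ B := (Finset.subset_union_right).trans h'
                obtain ⟨x, hx⟩ := hyne
                exact (inter_empty_iff.mp hdisj) x (hyB hx) hx
        · -- generic old edge
          obtain ⟨C, hCt, hCd, hCP⟩ := (ht.sib_exu hBt hBA).exists
          have hBne := ht.nonempty_of_mem hBt
          have hCne := ht.nonempty_of_mem hCt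
          -- helper: any candidate y ⊆ no j must be C
          have huniq_t : ∀ y, y ∈ t → B ∩ y = ∅ → B ∪ y ∈ t → y = C := fun y h1 h2 h3 =>
            (ht.sib_exu hBt hBA).unique ⟨h1, h2, h3⟩ ⟨hCt, hCd, hCP⟩
          by_cases hSC : S ⊆ C
          · -- sibling is C ∪ {j}
            refine ⟨C ∪ {j}, ⟨hmem_img hCt hSC, ?_, ?_⟩, ?_⟩
            · rw [inter_empty_iff]
              intro a ha
              simp only [Finset.mem_union, Finset.mem_singleton]
              push_neg
              exact ⟨(inter_empty_iff.mp hCd) a ha, fun he => hjB hBt (he ▸ ha)⟩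
            · rw [← Finset.union_assoc]
              exact hmem_img hCP (hSC.trans Finset.subset_union_right)
            · rintro y ⟨hy, hdisj, huny⟩
              by_cases hjy : j ∈ y
              · by_cases hyj : y = ({j} : Finset ℕ)
                · exfalso
                  subst hyj
                  obtain ⟨D, hD, hSD, hDeq⟩ := hext_j huny
                    (Finset.mem_union_right _ (Finset.mem_singleton_self j))
                    (hne_j hBne (hjB hBt))
                  have hSB : S ⊆ B := by
                    rw [union_singleton_inj (hjB hBt) (hjB hD) hDeq]
                    exact hSD
                  obtain ⟨x, hx⟩ := hSne
                  exact (inter_empty_iff.mp hCd) x (hSB hx) (hSC hx)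
                · obtain ⟨D, hD, hSD, rfl⟩ := hext_j hy hjy hyj
                  have hjBD : j ∉ B ∪ D := by
                    simp only [Finset.mem_union, not_or]
                    exact ⟨hjB hBt, hjB hD⟩
                  obtain ⟨E, hE, hSE, hEeq⟩ := hext_j huny
                    (Finset.mem_union_right _
                      (Finset.mem_union_right _ (Finset.mem_singleton_self j)))
                    (by rw [← Finset.union_assoc]; exact hne_j (hBne.mono Finset.subset_union_left) hjBD)
                  have hBDE : B ∪ D = E := by
                    apply union_singleton_inj hjBD (hjB hE)
                    rw [← hEeq, Finset.union_assoc]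
                  have hBDd : B ∩ D = ∅ := by
                    rw [inter_empty_iff] at hdisj ⊢
                    exact fun a ha ha' => hdisj a ha (Finset.mem_union_left _ ha')
                  rw [huniq_t D hD hBDd (hBDE ▸ hE)]
              · exfalso
                obtain ⟨hyt, hycond⟩ := hext_noj hy hjy
                have hBy := hext_noj huny (by
                  simp only [Finset.mem_union, not_or]
                  exact ⟨hjB hBt, hjy⟩)
                have hyC : y = C := huniq_t y hyt hdisj hBy.1
                subst hyC
                rcases hycond with h' | h'
                · obtain ⟨x, hx⟩ := hSne
                  exact (inter_empty_iff.mp h') x (hSC hx) hx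
                · have hCS : y = S := Finset.Subset.antisymm h' hSC
                  rcases hBy.2 with h'' | h''
                  · obtain ⟨x, hx⟩ := hSne
                    exact (inter_empty_iff.mp h'') x
                      (Finset.mem_union_right _ (hCS ▸ hx)) hx
                  · obtain ⟨x, hx⟩ := hBne
                    exact (inter_empty_iff.mp hCd) x hx
                      (hCS ▸ (h'' (Finset.mem_union_left _ hx)))
          · -- ¬ S ⊆ C : the sibling is C itself
            -- positional facts: C and B ∪ C survive in u
            have hpos : (C ∩ S = ∅ ∨ C ⊆ S) ∧ ((B ∪ C) ∩ S = ∅ ∨ B ∪ C ⊆ S) := by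
              rcases hBcond with hBd | hBsub
              · -- B ∩ S = ∅ : show C ∩ S = ∅
                have hCdS : C ∩ S = ∅ := by
                  rcases ht.laminar hCt hS with h | h | h
                  · exact h
                  · exfalso
                    -- C ⊊ S; compare P = B ∪ C with S
                    rcases ht.laminar hCP hS with h2 | h2 | h2
                    · obtain ⟨x, hx⟩ := hCne
                      exact (inter_empty_iff.mp h2) x (Finset.mem_union_right _ hx) (h hx)
                    · obtain ⟨x, hx⟩ := hBne
                      exact (inter_empty_iff.mp hBd) x hx (h2 (Finset.mem_union_left _ hx))
                    · refine hSC (fun x hx => ?_)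
                      rcases Finset.mem_union.mp (h2 hx) with h3 | h3
                      · exact absurd hx ((inter_empty_iff.mp hBd) x h3)
                      · exact h3
                  · exact absurd h hSC
                refine ⟨Or.inl hCdS, Or.inl ?_⟩
                rw [inter_empty_iff] at hBd hCdS ⊢
                intro a ha
                rcases Finset.mem_union.mp ha with h | h
                · exact hBd a h
                · exact hCdS a h
              · -- B ⊆ S (and B ≠ S, so B ⊊ S) : show B ∪ C ⊆ S
                have hPS : B ∪ C ⊆ S := by
                  rcases ht.laminar hCP hS with h2 | h2 | h2
                  · exfalso
                    obtain ⟨x, hx⟩ := hBne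
                    exact (inter_empty_iff.mp h2) x (Finset.mem_union_left _ hx) (hBsub hx)
                  · exact h2
                  · obtain ⟨x, hxS, hxB⟩ := Finset.exists_of_ssubset
                      (Finset.ssubset_iff_subset_ne.mpr ⟨hBsub, hBS⟩)
                    have hxC : x ∈ C := by
                      rcases Finset.mem_union.mp (h2 hxS) with h3 | h3
                      · exact absurd h3 hxB
                      · exact h3
                    rcases ht.laminar hCt hS with h3 | h3 | h3
                    · exact absurd hxS ((inter_empty_iff.mp h3) x hxC)
                    · exact Finset.union_subset hBsub h3
                    · exact absurd h3 hSC
                exact ⟨Or.inr ((Finset.subset_union_right).trans hPS), Or.inr hPS⟩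
            refine ⟨C, ⟨hmem_tu hCt hpos.1, hCd, hmem_tu hCP hpos.2⟩, ?_⟩
            rintro y ⟨hy, hdisj, huny⟩
            by_cases hjy : j ∈ y
            · exfalso
              by_cases hyj : y = ({j} : Finset ℕ)
              · subst hyj
                obtain ⟨D, hD, hSD, hDeq⟩ := hext_j huny
                  (Finset.mem_union_right _ (Finset.mem_singleton_self j))
                  (hne_j hBne (hjB hBt))
                have hSB : S ⊆ B := by
                  rw [union_singleton_inj (hjB hBt) (hjB hD) hDeq]
                  exact hSD
                rcases hBcond with h' | h'
                · obtain ⟨x, hx⟩ := hSne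
                  exact (inter_empty_iff.mp h') x (hSB hx) hx
                · exact hBS (Finset.Subset.antisymm h' hSB)
              · obtain ⟨D, hD, hSD, rfl⟩ := hext_j hy hjy hyj
                have hjBD : j ∉ B ∪ D := by
                  simp only [Finset.mem_union, not_or]
                  exact ⟨hjB hBt, hjB hD⟩
                obtain ⟨E, hE, hSE, hEeq⟩ := hext_j huny
                  (Finset.mem_union_right _
                    (Finset.mem_union_right _ (Finset.mem_singleton_self j)))
                  (by rw [← Finset.union_assoc]; exact hne_j (hBne.mono Finset.subset_union_left) hjBD)
                have hBDE : B ∪ D = E := by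
                  apply union_singleton_inj hjBD (hjB hE)
                  rw [← hEeq, Finset.union_assoc]
                have hBDd : B ∩ D = ∅ := by
                  rw [inter_empty_iff] at hdisj ⊢
                  exact fun a ha ha' => hdisj a ha (Finset.mem_union_left _ ha')
                exact hSC (huniq_t D hD hBDd (hBDE ▸ hE) ▸ hSD)
            · obtain ⟨hyt, -⟩ := hext_noj hy hjy
              have hBy := hext_noj huny (by
                simp only [Finset.mem_union, not_or]
                exact ⟨hjB hBt, hjy⟩)
              exact huniq_t y hyt hdisj hBy.1
    · -- B = C₀ ∪ {j}
      have hjC₀ := hjB hC₀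
      have hC₀A : C₀ ≠ A := by
        rintro rfl
        exact hBroot (union_singleton_eq _ _)
      obtain ⟨C, hCt, hCd, hCP⟩ := (ht.sib_exu hC₀ hC₀A).exists
      have hCdS : C ∩ S = ∅ := by
        rw [inter_empty_iff]
        exact fun a haC haS => (inter_empty_iff.mp hCd) a (hSC₀ haS) haC
      refine ⟨C, ⟨hmem_tu hCt (Or.inl hCdS), ?_, ?_⟩, ?_⟩
      · rw [inter_empty_iff]
        intro a ha
        rcases Finset.mem_union.mp ha with h | h
        · exact (inter_empty_iff.mp hCd) a h
        · rw [Finset.mem_singleton] at h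
          exact fun hc => hjB hCt (h ▸ hc)
      · have heq : C₀ ∪ {j} ∪ C = (C₀ ∪ C) ∪ {j} := by
          rw [Finset.union_right_comm]
        rw [heq]
        exact hmem_img hCP (hSC₀.trans Finset.subset_union_left)
      · rintro y ⟨hy, hdisj, huny⟩
        have hjy : j ∉ y := fun hjy => (inter_empty_iff.mp hdisj) j
          (Finset.mem_union_right _ (Finset.mem_singleton_self j)) hjy
        obtain ⟨hyt, -⟩ := hext_noj hy hjy
        have hC₀ne := ht.nonempty_of_mem hC₀
        have hne2 : C₀ ∪ {j} ∪ y ≠ {j} := by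
          rw [Finset.union_right_comm]
          exact hne_j (hC₀ne.mono Finset.subset_union_left)
            (by simp only [Finset.mem_union, not_or]; exact ⟨hjC₀, hjy⟩)
        obtain ⟨D, hD, hSD, hDeq⟩ := hext_j huny
          (Finset.mem_union_left _ (Finset.mem_union_right _ (Finset.mem_singleton_self j)))
          hne2
        have h2 : C₀ ∪ y = D := by
          apply union_singleton_inj
            (by simp only [Finset.mem_union, not_or]; exact ⟨hjC₀, hjy⟩) (hjB hD)
          rw [← hDeq, Finset.union_right_comm]
        have hdisj' : C₀ ∩ y = ∅ := by
          rw [inter_empty_iff] at hdisj ⊢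
          exact fun a ha => hdisj a (Finset.mem_union_left _ ha)
        exact (ht.sib_exu hC₀ hC₀A).unique ⟨hyt, hdisj', h2 ▸ hD⟩ ⟨hCt, hCd, hCP⟩
    · -- B = {j} : the sibling is S
      refine ⟨S, ⟨hmem_tu hS (Or.inr (Finset.Subset.refl _)), ?_, ?_⟩, ?_⟩
      · rw [inter_empty_iff]
        intro a ha
        rw [Finset.mem_singleton] at ha
        exact fun hjS => hjB hS (ha ▸ hjS)
      · rw [Finset.union_comm]
        exact hmem_img hS (Finset.Subset.refl _)
      · rintro y ⟨hy, hdisj, huny⟩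
        have hjy : j ∉ y := fun hjy =>
          (inter_empty_iff.mp hdisj) j (Finset.mem_singleton_self j) hjy
        obtain ⟨hyt, hycond⟩ := hext_noj hy hjy
        have hyne : y.Nonempty := ht.nonempty_of_mem hyt
        have h1 : {j} ∪ y ≠ ({j} : Finset ℕ) := by
          rw [Finset.union_comm]
          exact hne_j hyne hjy
        obtain ⟨C, hC, hSC, hCeq⟩ := hext_j huny
          (Finset.mem_union_left _ (Finset.mem_singleton_self j)) h1
        have hyC : y = C := by
          apply union_singleton_inj hjy (hjB hC)
          rw [← hCeq, Finset.union_comm]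
        subst hyC
        rcases hycond with h' | h'
        · exfalso
          obtain ⟨x, hx⟩ := hSne
          exact (inter_empty_iff.mp h') x (hSC hx) hx
        · exact Finset.Subset.antisymm h' hSC
  exact ⟨cond1, cond2, cond3, cond4⟩

lemma subtree_isLTree {A : Finset ℕ} {t : Finset (Finset ℕ)} {B C : Finset ℕ}
    (ht : IsLTree A t) (hB : B ∈ t) (hC : C ∈ t) (hd : B ∩ C = ∅) (hP : B ∪ C = A) :
    IsLTree B (t.filter (· ⊆ B)) := by
  have hCne := ht.nonempty_of_mem hC
  have hBA : B ≠ A := by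
    rintro rfl
    obtain ⟨x, hx⟩ := hCne
    exact (inter_empty_iff.mp hd) x ((hP ▸ Finset.mem_union_right B hx : x ∈ B)) hx
  refine ⟨?_, ?_, ?_, ?_⟩
  · intro D hD
    rw [Finset.mem_filter] at hD
    exact ⟨hD.2, ht.nonempty_of_mem hD.1⟩
  · intro i hi
    exact Finset.mem_filter.mpr ⟨ht.singleton_mem (ht.subset_of_mem hB hi),
      Finset.singleton_subset_iff.mpr hi⟩
  · intro B₁ h1 B₂ h2
    exact ht.laminar (Finset.mem_filter.mp h1).1 (Finset.mem_filter.mp h2).1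
  · intro D hD hDB
    rw [Finset.mem_filter] at hD
    obtain ⟨hDt, hDB'⟩ := hD
    have hDA : D ≠ A := fun h => hBA (Finset.Subset.antisymm (ht.subset_of_mem hB)
      (h ▸ hDB'))
    obtain ⟨D', hD't, hD'd, hD'P⟩ := (ht.sib_exu hDt hDA).exists
    have hDne := ht.nonempty_of_mem hDt
    have hD'B : D' ⊆ B := by
      rcases ht.laminar hD'P hB with h | h | h
      · exfalso
        obtain ⟨x, hx⟩ := hDne
        exact (inter_empty_iff.mp h) x (Finset.mem_union_left _ hx) (hDB' hx)
      · exact (Finset.subset_union_right).trans h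
      · -- B ⊆ D ∪ D'
        rcases ht.laminar hD't hB with h2 | h2 | h2
        · exfalso
          obtain ⟨x, hxB, hxD⟩ := Finset.exists_of_ssubset
            (Finset.ssubset_iff_subset_ne.mpr ⟨hDB', hDB⟩)
          have hxD' : x ∈ D' := by
            rcases Finset.mem_union.mp (h hxB) with h3 | h3
            · exact absurd h3 hxD
            · exact h3
          exact (inter_empty_iff.mp h2) x hxD' hxB
        · exact h2
        · exfalso
          obtain ⟨x, hx⟩ := hDne
          exact (inter_empty_iff.mp hD'd) x hx (h2 (hDB' hx))
    refine ⟨D', ⟨Finset.mem_filter.mpr ⟨hD't, hD'B⟩, hD'd,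
      Finset.mem_filter.mpr ⟨hD'P, Finset.union_subset hDB' hD'B⟩⟩, ?_⟩
    rintro y ⟨hy, hyd, hyP⟩
    exact (ht.sib_exu hDt hDA).unique ⟨(Finset.mem_filter.mp hy).1, hyd,
      (Finset.mem_filter.mp hyP).1⟩ ⟨hD't, hD'd, hD'P⟩

lemma tree_card : ∀ (n : ℕ) (A : Finset ℕ) (t : Finset (Finset ℕ)), A.card = n →
    A.Nonempty → IsLTree A t → t.card = 2 * A.card - 1 := by
  intro n
  induction n using Nat.strong_induction_on with
  | _ n ih =>
    intro A t hcard hA ht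
    by_cases h1 : A.card ≤ 1
    · have hA1 : A.card = 1 := le_antisymm h1 (Finset.card_pos.mpr hA)
      obtain ⟨a, rfl⟩ := Finset.card_eq_one.mp hA1
      have ht1 : t = {({a} : Finset ℕ)} := by
        apply Finset.eq_singleton_iff_unique_mem.mpr
        refine ⟨ht.singleton_mem (Finset.mem_singleton_self a), fun B hB => ?_⟩
        rcases Finset.subset_singleton_iff.mp (ht.subset_of_mem hB) with h | h
        · exact absurd h (Finset.nonempty_iff_ne_empty.mp (ht.nonempty_of_mem hB))
        · exact h
      simp [ht1, hA1]
    · push_neg at h1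
      have hAt : A ∈ t := ht.root_mem hA
      have hsne : (t.filter (· ⊂ A)).Nonempty := by
        obtain ⟨a, ha⟩ := hA
        refine ⟨{a}, Finset.mem_filter.mpr ⟨ht.singleton_mem ha, ?_⟩⟩
        refine Finset.ssubset_iff_subset_ne.mpr ⟨Finset.singleton_subset_iff.mpr ha, ?_⟩
        intro h
        rw [← h] at h1
        simp at h1
      obtain ⟨B, hBmem, hBmax⟩ := Finset.exists_maximal hsne
      rw [Finset.mem_filter] at hBmem
      obtain ⟨hBt, hBA⟩ := hBmem
      obtain ⟨C, hCt, hCd, hCP⟩ := (ht.sib_exu hBt hBA.ne).exists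
      have hBne := ht.nonempty_of_mem hBt
      have hCne := ht.nonempty_of_mem hCt
      -- the parent of B is the root A
      have hPA : B ∪ C = A := by
        by_contra hne
        refine (fun (hy : B ∪ C ∈ t.filter (· ⊂ A)) (hlt : B < B ∪ C) => lt_irrefl _ (lt_of_lt_of_le hlt (hBmax hy hlt.le))) (Finset.mem_filter.mpr ⟨hCP,
          Finset.ssubset_iff_subset_ne.mpr ⟨ht.subset_of_mem hCP, hne⟩⟩) ?_
        refine Finset.ssubset_iff_subset_ne.mpr ⟨Finset.subset_union_left, ?_⟩
        intro h
        obtain ⟨x, hx⟩ := hCne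
        exact (inter_empty_iff.mp hCd) x (h ▸ Finset.mem_union_right B hx) hx
      have hdisj : Disjoint B C := Finset.disjoint_iff_inter_eq_empty.mpr hCd
      have hcardA : B.card + C.card = A.card := by
        rw [← hPA, Finset.card_union_of_disjoint hdisj]
      have htB := subtree_isLTree ht hBt hCt hCd hPA
      have htC := subtree_isLTree ht hCt hBt
        (by rw [Finset.inter_comm]; exact hCd) (by rw [Finset.union_comm]; exact hPA)
      have hBcard : B.card < n := by
        have : B.card < A.card := by
          have := Finset.card_lt_card hBA
          omega
        omega
      have hCcard : C.card < n := by
        have hCA : C ⊂ A := by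
          refine Finset.ssubset_iff_subset_ne.mpr ⟨ht.subset_of_mem hCt, ?_⟩
          rintro rfl
          obtain ⟨x, hx⟩ := hBne
          exact (inter_empty_iff.mp hCd) x hx (ht.subset_of_mem hBt hx)
        have := Finset.card_lt_card hCA
        omega
      have ihB := ih B.card hBcard B _ rfl hBne htB
      have ihC := ih C.card hCcard C _ rfl hCne htC
      -- t = {A} ∪ tB ∪ tC
      have hsplit : t = insert A (t.filter (· ⊆ B) ∪ t.filter (· ⊆ C)) := by
        ext D
        simp only [Finset.mem_insert, Finset.mem_union, Finset.mem_filter]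
        constructor
        · intro hD
          by_cases hDA : D = A
          · exact Or.inl hDA
          · right
            have hDne := ht.nonempty_of_mem hD
            rcases ht.laminar hD hBt with h | h | h
            · -- D ∩ B = ∅ → D ⊆ C
              refine Or.inr ⟨hD, fun x hx => ?_⟩
              rcases Finset.mem_union.mp (hPA ▸ ht.subset_of_mem hD hx : x ∈ B ∪ C)
                with h2 | h2
              · exact absurd h2 ((inter_empty_iff.mp h) x hx)
              · exact h2
            · exact Or.inl ⟨hD, h⟩
            · -- B ⊆ D
              by_cases hBD : B = D
              · exact Or.inl ⟨hD, hBD ▸ Finset.Subset.refl _⟩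
              · exfalso
                rcases ht.laminar hD hCt with h2 | h2 | h2
                · -- D ∩ C = ∅ → D ⊆ B, contradiction with B ⊊ D
                  have hDB : D ⊆ B := by
                    intro x hx
                    rcases Finset.mem_union.mp (hPA ▸ ht.subset_of_mem hD hx : x ∈ B ∪ C)
                      with h3 | h3
                    · exact h3
                    · exact absurd h3 ((inter_empty_iff.mp h2) x hx)
                  exact hBD (Finset.Subset.antisymm h hDB)
                · obtain ⟨x, hx⟩ := hBne
                  exact (inter_empty_iff.mp hCd) x hx (h2 (h hx))
                · exact hDA (Finset.Subset.antisymm (ht.subset_of_mem hD)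
                    (hPA ▸ Finset.union_subset h h2))
        · rintro (rfl | ⟨h, -⟩ | ⟨h, -⟩) <;> [exact hAt; exact h; exact h]
      have hAnB : A ∉ t.filter (· ⊆ B) := by
        rw [Finset.mem_filter]
        rintro ⟨-, h⟩
        obtain ⟨x, hx⟩ := hCne
        exact (inter_empty_iff.mp hCd) x (h (hPA ▸ Finset.mem_union_right B hx)) hx
      have hAnC : A ∉ t.filter (· ⊆ C) := by
        rw [Finset.mem_filter]
        rintro ⟨-, h⟩
        obtain ⟨x, hx⟩ := hBne
        exact (inter_empty_iff.mp hCd) x hx (h (hPA ▸ Finset.mem_union_left C hx))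
      have hBCdisj : Disjoint (t.filter (· ⊆ B)) (t.filter (· ⊆ C)) := by
        rw [Finset.disjoint_left]
        intro D hD1 hD2
        rw [Finset.mem_filter] at hD1 hD2
        obtain ⟨x, hx⟩ := ht.nonempty_of_mem hD1.1
        exact (inter_empty_iff.mp hCd) x (hD1.2 hx) (hD2.2 hx)
      have hc1 : B.card ≥ 1 := Finset.card_pos.mpr hBne
      have hc2 : C.card ≥ 1 := Finset.card_pos.mpr hCne
      rw [hsplit, Finset.card_insert_of_notMem (by
          simp only [Finset.mem_union]; exact fun h => h.elim hAnB hAnC),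
        Finset.card_union_of_disjoint hBCdisj, ihB, ihC]
      omega

lemma ext_edges_eq {A : Finset ℕ} {t : Finset (Finset ℕ)} (ht : IsLTree A t) :
    t.filter (fun B => ¬ 2 ≤ B.card) = A.image (fun a => ({a} : Finset ℕ)) := by
  ext B
  simp only [Finset.mem_filter, Finset.mem_image]
  constructor
  · rintro ⟨hBt, hc⟩
    have h1 : B.card = 1 := by
      have := Finset.card_pos.mpr (ht.nonempty_of_mem hBt)
      omega
    obtain ⟨a, rfl⟩ := Finset.card_eq_one.mp h1
    exact ⟨a, ht.subset_of_mem hBt (Finset.mem_singleton_self a), rfl⟩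
  · rintro ⟨a, ha, rfl⟩
    exact ⟨ht.singleton_mem ha, by simp⟩

lemma fordWeight_sum {A : Finset ℕ} {t : Finset (Finset ℕ)} (ht : IsLTree A t)
    (hA : A.Nonempty) (α : ℝ) : ∑ S ∈ t, fordWeight α S = (A.card : ℝ) - α := by
  have hsplit := Finset.sum_filter_add_sum_filter_not t (fun B => 2 ≤ B.card)
    (fun B => fordWeight α B)
  have hext : (t.filter (fun B => ¬ 2 ≤ B.card)).card = A.card := by
    rw [ext_edges_eq ht, Finset.card_image_of_injective _ (fun a b h => by
      simpa using h)]
  have htot : t.card = 2 * A.card - 1 := tree_card A.card A t rfl hA ht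
  have hpart : (t.filter (fun B => 2 ≤ B.card)).card +
      (t.filter (fun B => ¬ 2 ≤ B.card)).card = t.card :=
    Finset.card_filter_add_card_filter_not _
  have hAc : 1 ≤ A.card := Finset.card_pos.mpr hA
  have hint : (t.filter (fun B => 2 ≤ B.card)).card = A.card - 1 := by omega
  rw [← hsplit]
  have e1 : ∑ B ∈ t.filter (fun B => 2 ≤ B.card), fordWeight α B =
      ∑ B ∈ t.filter (fun B => 2 ≤ B.card), α :=
    Finset.sum_congr rfl (fun B hB => by
      rw [fordWeight, if_pos (Finset.mem_filter.mp hB).2])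
  have e2 : ∑ B ∈ t.filter (fun B => ¬ 2 ≤ B.card), fordWeight α B =
      ∑ B ∈ t.filter (fun B => ¬ 2 ≤ B.card), (1 - α) :=
    Finset.sum_congr rfl (fun B hB => by
      rw [fordWeight, if_neg (Finset.mem_filter.mp hB).2])
  rw [e1, e2, Finset.sum_const, Finset.sum_const, hint, hext, nsmul_eq_mul, nsmul_eq_mul]
  have : ((A.card - 1 : ℕ) : ℝ) = (A.card : ℝ) - 1 := by
    push_cast [Nat.cast_sub hAc]
    ring
  rw [this]
  ring

lemma union_singleton_eq_insert_iff {X A : Finset ℕ} {j : ℕ} (hX : j ∉ X) (hA : j ∉ A) :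
    X ∪ {j} = insert j A ↔ X = A := by
  rw [union_singleton_eq]
  constructor
  · intro h
    have := congrArg (·.erase j) h
    simpa [Finset.erase_insert hX, Finset.erase_insert hA] using this
  · rintro rfl
    rfl

lemma tildeOf_def (A : Finset ℕ) (t : Finset (Finset ℕ)) (i : ℕ) :
    tildeOf A t i = max i (max (minLbl (sibling t {i}))
      (if parentEdge t {i} = A then 0 else minLbl (sibling t (parentEdge t {i})))) := rfl

lemma tildeOf_eq_self {A : Finset ℕ} {t : Finset (Finset ℕ)} {j : ℕ}
    (ht : IsLTree A t) (hA : ∀ x ∈ A, x ≤ j) : tildeOf A t j = j :=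
  le_antisymm (tildeOf_le ht hA le_rfl) (le_max_left _ _)

lemma tildeOf_insertLeaf {A : Finset ℕ} {t : Finset (Finset ℕ)} {S : Finset ℕ} {j i : ℕ}
    (ht : IsLTree A t) (hS : S ∈ t) (hlt : ∀ x ∈ A, x < j) (hA2 : 2 ≤ A.card)
    (hi : i ∈ A) :
    tildeOf (insert j A) (insertLeaf t S j) i =
      if S = {i} ∨ S = parentEdge t {i} then j else tildeOf A t i := by
  set u := insertLeaf t S j with hu_def
  have hj : j ∉ A := fun h => lt_irrefl j (hlt j h)
  have hu : IsLTree (insert j A) u := insertLeaf_isLTree ht hS hj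
  have hSne : S.Nonempty := ht.nonempty_of_mem hS
  have hSsub := ht.subset_of_mem hS
  have hjS : j ∉ S := fun h => hj (hSsub h)
  have hij : i ≠ j := fun h => hj (h ▸ hi)
  have mU1 : ∀ {B : Finset ℕ}, B ∈ t → (B ∩ S = ∅ ∨ B ⊆ S) → B ∈ u := fun h1 h2 =>
    mem_insertLeaf.mpr (Or.inl ⟨h1, h2⟩)
  have mU2 : ∀ {B : Finset ℕ}, B ∈ t → S ⊆ B → B ∪ {j} ∈ u := fun h1 h2 =>
    mem_insertLeaf.mpr (Or.inr (Or.inl ⟨_, h1, h2, rfl⟩))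
  have mUj : ({j} : Finset ℕ) ∈ u := mem_insertLeaf.mpr (Or.inr (Or.inr rfl))
  have hiA_t : ({i} : Finset ℕ) ∈ t := ht.singleton_mem hi
  have hiAne : ({i} : Finset ℕ) ≠ A := by
    intro h
    rw [← h] at hA2
    simp at hA2
  obtain ⟨C, hCt, hCd, hPt⟩ := (ht.sib_exu hiA_t hiAne).exists
  have hsibC : sibling t ({i} : Finset ℕ) = C := ht.sibling_eq hiA_t hiAne hCt hCd hPt
  have hparC : parentEdge t ({i} : Finset ℕ) = {i} ∪ C := by rw [parentEdge, hsibC]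
  have hCne := ht.nonempty_of_mem hCt
  have hCsub := ht.subset_of_mem hCt
  have hiC : i ∉ C := (inter_empty_iff.mp hCd) i (Finset.mem_singleton_self i)
  have hjC : j ∉ C := fun h => hj (hCsub h)
  have hjP : j ∉ {i} ∪ C := by
    simp only [Finset.mem_union, Finset.mem_singleton, not_or]
    exact ⟨fun h => hij h.symm, hjC⟩
  have hCltj : ∀ x ∈ C, x < j := fun x hx => hlt x (hCsub hx)
  have hminCj : minLbl C ≤ j := minLbl_le (fun x hx => le_of_lt (hCltj x hx))
  have hiu : ({i} : Finset ℕ) ∈ u := hu.singleton_mem (Finset.mem_insert_of_mem hi)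
  have hi2ne : ({i} : Finset ℕ) ≠ insert j A := by
    intro h
    have h1 : ({i} : Finset ℕ).card = (insert j A).card := by rw [h]
    rw [Finset.card_singleton, Finset.card_insert_of_notMem hj] at h1
    omega
  have hPu2ne : ({i} ∪ C : Finset ℕ) ≠ insert j A := by
    intro h
    exact hjP (h ▸ Finset.mem_insert_self j A)
  have hilt : i < j := hlt i hi
  by_cases hS1 : S = {i}
  · -- insertion on the leaf edge {i}
    subst hS1
    rw [if_pos (Or.inl rfl)]
    have hsib1 : sibling u ({i} : Finset ℕ) = {j} := by
      refine hu.sibling_eq hiu hi2ne mUj ?_ ?_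
      · rw [inter_empty_iff]
        intro a ha
        rw [Finset.mem_singleton] at ha ⊢
        exact ha ▸ hij
      · exact mU2 hiA_t (Finset.Subset.refl _)
    have hpar1 : parentEdge u ({i} : Finset ℕ) = {i} ∪ {j} := by rw [parentEdge, hsib1]
    have hPju : ({i} ∪ {j} : Finset ℕ) ∈ u := mU2 hiA_t (Finset.Subset.refl _)
    have hPjne : ({i} ∪ {j} : Finset ℕ) ≠ insert j A := by
      rw [Ne, union_singleton_eq_insert_iff
        (fun h => hij (Finset.mem_singleton.mp h).symm) hj]
      exact hiAne
    have hsib2 : sibling u ({i} ∪ {j} : Finset ℕ) = C := by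
      refine hu.sibling_eq hPju hPjne (mU1 hCt (Or.inl (by
        rw [inter_empty_iff]
        intro a ha
        rw [Finset.mem_singleton]
        exact fun he => hiC (he ▸ ha)))) ?_ ?_
      · rw [inter_empty_iff]
        intro a ha
        rcases Finset.mem_union.mp ha with h | h
        · rw [Finset.mem_singleton] at h
          exact h ▸ hiC
        · rw [Finset.mem_singleton] at h
          exact h ▸ hjC
      · have heq : ({i} ∪ {j}) ∪ C = ({i} ∪ C) ∪ {j} := by rw [Finset.union_right_comm]
        rw [heq]
        exact mU2 hPt Finset.subset_union_left
    rw [tildeOf_def, hsib1, hpar1, hsib2, if_neg hPjne, minLbl_singleton,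
      Nat.max_eq_left hminCj, Nat.max_eq_right (le_of_lt hilt)]
  · by_cases hS2 : S = parentEdge t ({i} : Finset ℕ)
    · -- insertion on the parent edge of {i}
      rw [if_pos (Or.inr hS2)]
      rw [hparC] at hS2
      subst hS2
      have hCsubS : C ⊆ {i} ∪ C := Finset.subset_union_right
      have hsib1 : sibling u ({i} : Finset ℕ) = C := by
        refine hu.sibling_eq hiu hi2ne (mU1 hCt (Or.inr hCsubS)) hCd
          (mU1 hPt (Or.inr (Finset.Subset.refl _)))
      have hpar1 : parentEdge u ({i} : Finset ℕ) = {i} ∪ C := by rw [parentEdge, hsib1]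
      have hsib2 : sibling u ({i} ∪ C : Finset ℕ) = {j} := by
        refine hu.sibling_eq (mU1 hPt (Or.inr (Finset.Subset.refl _))) hPu2ne mUj ?_ ?_
        · rw [inter_empty_iff]
          intro a ha
          rw [Finset.mem_singleton]
          exact fun he => hjP (he ▸ ha)
        · exact mU2 hPt (Finset.Subset.refl _)
      rw [tildeOf_def, hsib1, hpar1, hsib2, if_neg hPu2ne, minLbl_singleton,
        Nat.max_eq_right hminCj, Nat.max_eq_right (le_of_lt hilt)]
    · -- insertion elsewhere: tilde unchanged
      rw [if_neg (by push_neg; exact ⟨hS1, hS2⟩)]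
      rw [hparC] at hS2
      by_cases hSC : S ⊆ C
      · -- S sits inside the sibling subtree of {i}
        have hminCj' : minLbl (C ∪ {j}) = minLbl C := minLbl_union_singleton hCne hCltj
        have hsib1 : sibling u ({i} : Finset ℕ) = C ∪ {j} := by
          refine hu.sibling_eq hiu hi2ne (mU2 hCt hSC) ?_ ?_
          · rw [inter_empty_iff]
            intro a ha
            rw [Finset.mem_singleton] at ha
            subst ha
            simp only [Finset.mem_union, Finset.mem_singleton, not_or]
            exact ⟨hiC, hij⟩
          · have heq : {i} ∪ (C ∪ {j}) = ({i} ∪ C) ∪ {j} := by rw [Finset.union_assoc]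
            rw [heq]
            exact mU2 hPt (hSC.trans Finset.subset_union_right)
        have hpar1 : parentEdge u ({i} : Finset ℕ) = ({i} ∪ C) ∪ {j} := by
          rw [parentEdge, hsib1, Finset.union_assoc]
        by_cases hPA : {i} ∪ C = A
        · -- the parent of {i} is the root
          have hroot : ({i} ∪ C) ∪ {j} = insert j A := by
            rw [union_singleton_eq_insert_iff hjP hj]
            exact hPA
          rw [tildeOf_def, hsib1, hpar1, if_pos hroot, hminCj',
            tildeOf_def, hsibC, hparC, if_pos hPA]
        · obtain ⟨D, hDt, hDd, hDP⟩ := (ht.sib_exu hPt hPA).exists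
          have hsibD : sibling t ({i} ∪ C : Finset ℕ) = D :=
            ht.sibling_eq hPt hPA hDt hDd hDP
          have hDne := ht.nonempty_of_mem hDt
          have hDsub := ht.subset_of_mem hDt
          have hjD : j ∉ D := fun h => hj (hDsub h)
          have hroot : ({i} ∪ C) ∪ {j} ≠ insert j A := by
            rw [Ne, union_singleton_eq_insert_iff hjP hj]
            exact hPA
          have hSP : S ⊆ {i} ∪ C := hSC.trans Finset.subset_union_right
          have hDS : D ∩ S = ∅ := by
            rw [inter_empty_iff]
            exact fun a ha ha' => (inter_empty_iff.mp hDd) a (hSP ha') ha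
          have hsib2 : sibling u (({i} ∪ C) ∪ {j} : Finset ℕ) = D := by
            refine hu.sibling_eq (mU2 hPt hSP) hroot (mU1 hDt (Or.inl hDS)) ?_ ?_
            · rw [inter_empty_iff]
              intro a ha
              rcases Finset.mem_union.mp ha with h | h
              · exact (inter_empty_iff.mp hDd) a h
              · rw [Finset.mem_singleton] at h
                exact h ▸ hjD
            · have heq : (({i} ∪ C) ∪ {j}) ∪ D = (({i} ∪ C) ∪ D) ∪ {j} := by
                rw [Finset.union_right_comm]
              rw [heq]
              exact mU2 hDP (hSP.trans Finset.subset_union_left)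
          rw [tildeOf_def, hsib1, hpar1, hsib2, if_neg hroot, hminCj',
            tildeOf_def, hsibC, hparC, hsibD, if_neg hPA]
      · -- S is disjoint from the parent of {i}, or strictly above it
        -- first: position of S relative to P = {i} ∪ C
        have hPpos : ({i} ∪ C) ∩ S = ∅ ∨ ({i} ∪ C) ⊆ S := by
          rcases ht.laminar hPt hS with h | h | h
          · exact Or.inl h
          · exact Or.inr h
          · -- S ⊆ {i} ∪ C : impossible
            exfalso
            by_cases hiS : i ∈ S
            · -- {i} ⊊ S, so S meets C
              obtain ⟨x, hxS, hxi⟩ := Finset.exists_of_ssubset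
                (Finset.ssubset_iff_subset_ne.mpr
                  ⟨Finset.singleton_subset_iff.mpr hiS, fun he => hS1 he.symm⟩)
              have hxC : x ∈ C := by
                rcases Finset.mem_union.mp (h hxS) with h2 | h2
                · exact absurd (Finset.mem_singleton.mp h2) (by
                    intro he
                    exact hxi (he ▸ Finset.mem_singleton_self i))
                · exact h2
              rcases ht.laminar hS hCt with h2 | h2 | h2
              · exact (inter_empty_iff.mp h2) x hxS hxC
              · exact hiC (h2 hiS)
              · exact hS2 (Finset.Subset.antisymm h
                  (Finset.union_subset (Finset.singleton_subset_iff.mpr hiS) h2))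
            · -- i ∉ S, so S ⊆ C
              refine hSC (fun x hx => ?_)
              rcases Finset.mem_union.mp (h hx) with h2 | h2
              · exact absurd (Finset.mem_singleton.mp h2) (fun he => hiS (he ▸ hx))
              · exact h2
        have hCpos : C ∩ S = ∅ ∨ C ⊆ S := by
          rcases hPpos with h | h
          · refine Or.inl ?_
            rw [inter_empty_iff] at h ⊢
            exact fun a ha => h a (Finset.mem_union_right _ ha)
          · exact Or.inr ((Finset.subset_union_right).trans h)
        have hPA : {i} ∪ C ≠ A := by
          intro hPA
          rcases hPpos with h | h
          · obtain ⟨x, hx⟩ := hSne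
            exact (inter_empty_iff.mp h) x (hPA ▸ hSsub hx) hx
          · exact hS2 (Finset.Subset.antisymm (by rw [hPA]; exact hSsub) h)
        obtain ⟨D, hDt, hDd, hDP⟩ := (ht.sib_exu hPt hPA).exists
        have hsibD : sibling t ({i} ∪ C : Finset ℕ) = D :=
          ht.sibling_eq hPt hPA hDt hDd hDP
        have hDne := ht.nonempty_of_mem hDt
        have hDsub := ht.subset_of_mem hDt
        have hjD : j ∉ D := fun h => hj (hDsub h)
        have hsib1 : sibling u ({i} : Finset ℕ) = C :=
          hu.sibling_eq hiu hi2ne (mU1 hCt hCpos) hCd (mU1 hPt hPpos)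
        have hpar1 : parentEdge u ({i} : Finset ℕ) = {i} ∪ C := by rw [parentEdge, hsib1]
        by_cases hSD : S ⊆ D
        · -- S inside the sibling subtree of the parent
          have hsib2 : sibling u ({i} ∪ C : Finset ℕ) = D ∪ {j} := by
            refine hu.sibling_eq (mU1 hPt hPpos) hPu2ne (mU2 hDt hSD) ?_ ?_
            · rw [inter_empty_iff]
              intro a ha
              simp only [Finset.mem_union, Finset.mem_singleton, not_or]
              exact ⟨(inter_empty_iff.mp hDd) a ha, fun he => hjP (he ▸ ha)⟩
            · have heq : ({i} ∪ C) ∪ (D ∪ {j}) = (({i} ∪ C) ∪ D) ∪ {j} := by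
                rw [← Finset.union_assoc]
              rw [heq]
              exact mU2 hDP (hSD.trans Finset.subset_union_right)
          have hminD : minLbl (D ∪ {j}) = minLbl D :=
            minLbl_union_singleton hDne (fun x hx => hlt x (hDsub hx))
          rw [tildeOf_def, hsib1, hpar1, hsib2, if_neg hPu2ne, hminD,
            tildeOf_def, hsibC, hparC, hsibD, if_neg hPA]
        · -- S disjoint from D ∪ P, or strictly above the grandparent
          have hposD : (D ∩ S = ∅ ∨ D ⊆ S) ∧
              ((({i} ∪ C) ∪ D) ∩ S = ∅ ∨ ({i} ∪ C) ∪ D ⊆ S) := by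
            rcases ht.laminar hDP hS with h | h | h
            · constructor
              · refine Or.inl ?_
                rw [inter_empty_iff] at h ⊢
                exact fun a ha => h a (Finset.mem_union_right _ ha)
              · exact Or.inl h
            · exact ⟨Or.inr ((Finset.subset_union_right).trans h), Or.inr h⟩
            · -- S ⊆ P ∪ D
              rcases hPpos with h2 | h2
              · -- S ∩ P = ∅ → S ⊆ D, contradiction
                exfalso
                refine hSD (fun x hx => ?_)
                rcases Finset.mem_union.mp (h hx) with h3 | h3
                · exact absurd hx ((inter_empty_iff.mp h2) x h3)
                · exact h3
              · -- P ⊆ S : then P ∪ D ⊆ S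
                obtain ⟨x, hxS, hxP⟩ := Finset.exists_of_ssubset
                  (Finset.ssubset_iff_subset_ne.mpr ⟨h2, fun he => hS2 he.symm⟩)
                have hxD : x ∈ D := by
                  rcases Finset.mem_union.mp (h hxS) with h3 | h3
                  · exact absurd h3 hxP
                  · exact h3
                have hDsubS : D ⊆ S := by
                  rcases ht.laminar hS hDt with h3 | h3 | h3
                  · exact absurd hxD ((inter_empty_iff.mp h3) x hxS)
                  · exfalso
                    obtain ⟨y, hy⟩ := ht.nonempty_of_mem hPt
                    exact (inter_empty_iff.mp hDd) y hy (h3 (h2 hy))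
                  · exact h3
                exact ⟨Or.inr hDsubS, Or.inr (Finset.union_subset h2 hDsubS)⟩
          have hsib2 : sibling u ({i} ∪ C : Finset ℕ) = D := by
            refine hu.sibling_eq (mU1 hPt hPpos) hPu2ne (mU1 hDt hposD.1) hDd
              (mU1 hDP hposD.2)
          rw [tildeOf_def, hsib1, hpar1, hsib2, if_neg hPu2ne,
            tildeOf_def, hsibC, hparC, hsibD, if_neg hPA]

lemma sum_LTree_eq {A : Finset ℕ} (u : Finset (Finset ℕ)) (g : Finset (Finset ℕ) → ℝ) :
    (∑ t : LTree A, if t.1 = u then g t.1 else 0) = if IsLTree A u then g u else 0 := by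
  by_cases h : IsLTree A u
  · rw [if_pos h]
    have h1 : (∑ t : LTree A, if t.1 = u then g t.1 else 0)
        = (if ((⟨u, h⟩ : LTree A)).1 = u then g ((⟨u, h⟩ : LTree A)).1 else 0) :=
      Finset.sum_eq_single _ (fun t _ htne => if_neg fun he => htne (Subtype.ext he))
        (fun habs => absurd (Finset.mem_univ _) habs)
    rw [h1, if_pos rfl]
  · rw [if_neg h]
    apply Finset.sum_eq_zero
    intro t _
    exact if_neg (fun he => h (by rw [← he]; exact t.2))

lemma lbl_card (m : ℕ) : (lbl m).card = m := by simp [lbl]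

lemma lbl_succ (m : ℕ) : lbl (m + 1) = insert (m + 1) (lbl m) := by
  ext x
  simp only [lbl, Finset.mem_Icc, Finset.mem_insert]
  omega

lemma succ_not_mem_lbl (m : ℕ) : m + 1 ∉ lbl m := by
  simp [lbl]

lemma lbl_lt_succ {m x : ℕ} (hx : x ∈ lbl m) : x < m + 1 := by
  rw [mem_lbl] at hx
  omega

def t2 : Finset (Finset ℕ) := {{1}, {2}, {1, 2}}

lemma lbl_two : lbl 2 = ({1, 2} : Finset ℕ) := by decide

lemma isLTree_t2 : IsLTree (lbl 2) t2 := by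
  rw [lbl_two]
  refine ⟨by decide, by decide, by decide, ?_⟩
  intro B hB hBne
  fin_cases hB
  · refine ⟨{2}, by decide, ?_⟩
    rintro y ⟨hy, hd, hu⟩
    fin_cases hy
    · exact absurd hd (by decide)
    · rfl
    · exact absurd hd (by decide)
  · refine ⟨{1}, by decide, ?_⟩
    rintro y ⟨hy, hd, hu⟩
    fin_cases hy
    · rfl
    · exact absurd hd (by decide)
    · exact absurd hd (by decide)
  · exact absurd rfl hBne

lemma tree2_eq {t : Finset (Finset ℕ)} (ht : IsLTree (lbl 2) t) : t = t2 := by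
  ext B
  constructor
  · intro hB
    have hsub := ht.subset_of_mem hB
    have hne := ht.nonempty_of_mem hB
    rw [lbl_two] at hsub
    have hBcases : B = {1} ∨ B = {2} ∨ B = ({1, 2} : Finset ℕ) := by
      by_cases h1 : 1 ∈ B <;> by_cases h2 : 2 ∈ B
      · refine Or.inr (Or.inr (Finset.Subset.antisymm hsub ?_))
        intro x hx
        simp only [Finset.mem_insert, Finset.mem_singleton] at hx
        rcases hx with rfl | rfl
        · exact h1
        · exact h2
      · refine Or.inl (Finset.eq_singleton_iff_unique_mem.mpr ⟨h1, fun x hx => ?_⟩)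
        have := hsub hx
        simp only [Finset.mem_insert, Finset.mem_singleton] at this
        rcases this with rfl | rfl
        · rfl
        · exact absurd hx h2
      · refine Or.inr (Or.inl (Finset.eq_singleton_iff_unique_mem.mpr ⟨h2, fun x hx => ?_⟩))
        have := hsub hx
        simp only [Finset.mem_insert, Finset.mem_singleton] at this
        rcases this with rfl | rfl
        · exact absurd hx h1
        · rfl
      · exfalso
        obtain ⟨x, hx⟩ := hne
        have := hsub hx
        simp only [Finset.mem_insert, Finset.mem_singleton] at this
        rcases this with rfl | rfl
        · exact h1 hx
        · exact h2 hx
    rcases hBcases with rfl | rfl | rfl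
    · decide
    · decide
    · decide
  · intro hB
    fin_cases hB
    · exact ht.singleton_mem (by decide)
    · exact ht.singleton_mem (by decide)
    · have := ht.root_mem ⟨1, by decide⟩
      rwa [lbl_two] at this

lemma sum_LTree_two (g : LTree (lbl 2) → ℝ) : ∑ t : LTree (lbl 2), g t = g ⟨t2, isLTree_t2⟩ := by
  have huniq : ∀ t : LTree (lbl 2), t = ⟨t2, isLTree_t2⟩ := fun t => Subtype.ext (tree2_eq t.2)
  rw [show (Finset.univ : Finset (LTree (lbl 2))) = {⟨t2, isLTree_t2⟩} from
    Finset.eq_singleton_iff_unique_mem.mpr ⟨Finset.mem_univ _, fun x _ => huniq x⟩]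
  exact Finset.sum_singleton g _

lemma tilde_t2_one : tildeOf (lbl 2) t2 1 = 2 := by
  have hs1 : sibling t2 {1} = {2} := isLTree_t2.sibling_eq (by decide)
    (by rw [lbl_two]; decide) (by decide) (by decide) (by decide)
  rw [tildeOf_def, parentEdge, hs1, if_pos (by rw [lbl_two]; decide), minLbl_singleton]
  decide

lemma tilde_t2_two : tildeOf (lbl 2) t2 2 = 2 := by
  have hs2 : sibling t2 {2} = {1} := isLTree_t2.sibling_eq (by decide)
    (by rw [lbl_two]; decide) (by decide) (by decide) (by decide)
  rw [tildeOf_def, parentEdge, hs2, if_pos (by rw [lbl_two]; decide), minLbl_singleton]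
  decide

lemma growStep_apply (α : ℝ) {m : ℕ} (hm : 1 ≤ m) {s : Finset (Finset ℕ)}
    (hs : IsLTree (lbl m) s) (g : Finset (Finset ℕ) → ℝ) :
    ∑ t : LTree (lbl (m + 1)), growStepF α m s t.1 * g t.1
      = ∑ S ∈ s, (fordWeight α S / ((m : ℝ) - α)) * g (insertLeaf s S (m + 1)) := by
  have hlblne : (lbl m).Nonempty := ⟨1, mem_lbl.mpr ⟨le_rfl, hm⟩⟩
  have hW : ∑ S' ∈ s, fordWeight α S' = (m : ℝ) - α := by
    rw [fordWeight_sum hs hlblne, lbl_card]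
  have hins : ∀ S ∈ s, IsLTree (lbl (m + 1)) (insertLeaf s S (m + 1)) := by
    intro S hSs
    rw [lbl_succ]
    exact insertLeaf_isLTree hs hSs (succ_not_mem_lbl m)
  simp only [growStepF, hW]
  calc ∑ t : LTree (lbl (m + 1)),
      (∑ S ∈ s, if t.1 = insertLeaf s S (m + 1) then fordWeight α S / ((m : ℝ) - α) else 0)
        * g t.1
      = ∑ t : LTree (lbl (m + 1)), ∑ S ∈ s,
          (if t.1 = insertLeaf s S (m + 1) then (fordWeight α S / ((m : ℝ) - α)) * g t.1
            else 0) := by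
        refine Finset.sum_congr rfl fun t _ => ?_
        rw [Finset.sum_mul]
        exact Finset.sum_congr rfl fun S _ => by rw [ite_mul, zero_mul]
    _ = ∑ S ∈ s, ∑ t : LTree (lbl (m + 1)),
          (if t.1 = insertLeaf s S (m + 1) then (fordWeight α S / ((m : ℝ) - α)) * g t.1
            else 0) := Finset.sum_comm
    _ = ∑ S ∈ s, (fordWeight α S / ((m : ℝ) - α)) * g (insertLeaf s S (m + 1)) := by
        refine Finset.sum_congr rfl fun S hSs => ?_
        rw [show (∑ t : LTree (lbl (m + 1)),
            (if t.1 = insertLeaf s S (m + 1) then (fordWeight α S / ((m : ℝ) - α)) * g t.1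
              else 0))
          = (if IsLTree (lbl (m + 1)) (insertLeaf s S (m + 1)) then
              (fordWeight α S / ((m : ℝ) - α)) * g (insertLeaf s S (m + 1)) else 0) from
          sum_LTree_eq _ (fun u => (fordWeight α S / ((m : ℝ) - α)) * g u),
          if_pos (hins S hSs)]

lemma qF_succ (α : ℝ) {m : ℕ} (hm : 2 ≤ m) (t : LTree (lbl (m + 1))) :
    qF α (m + 1) t = ∑ s : LTree (lbl m), qF α m s * growStepF α m s.1 t.1 := by
  obtain ⟨k, rfl⟩ : ∃ k, m = k + 2 := ⟨m - 2, by omega⟩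
  rfl

lemma qF_total (α : ℝ) (hα1 : α < 1) : ∀ m, 2 ≤ m → ∑ t : LTree (lbl m), qF α m t = 1 := by
  intro m hm
  induction m, hm using Nat.le_induction with
  | base =>
    rw [sum_LTree_two (fun t => qF α 2 t)]
    rfl
  | succ m hm ih =>
    have hWne : ((m : ℝ) - α) ≠ 0 := by
      have : (2 : ℝ) ≤ (m : ℝ) := by exact_mod_cast hm
      linarith
    calc ∑ t : LTree (lbl (m + 1)), qF α (m + 1) t
        = ∑ t : LTree (lbl (m + 1)), ∑ s : LTree (lbl m),
            qF α m s * growStepF α m s.1 t.1 :=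
          Finset.sum_congr rfl fun t _ => qF_succ α hm t
      _ = ∑ s : LTree (lbl m), ∑ t : LTree (lbl (m + 1)),
            qF α m s * growStepF α m s.1 t.1 := Finset.sum_comm
      _ = ∑ s : LTree (lbl m), qF α m s *
            ∑ t : LTree (lbl (m + 1)), growStepF α m s.1 t.1 * 1 := by
          refine Finset.sum_congr rfl fun s _ => ?_
          rw [Finset.mul_sum]
          exact Finset.sum_congr rfl fun t _ => by rw [mul_one]
      _ = ∑ s : LTree (lbl m), qF α m s * 1 := by
          refine Finset.sum_congr rfl fun s _ => ?_
          rw [growStep_apply α (by omega) s.2 (fun _ => 1)]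
          congr 1
          calc ∑ S ∈ s.1, fordWeight α S / ((m : ℝ) - α) * 1
              = (∑ S ∈ s.1, fordWeight α S) / ((m : ℝ) - α) := by
                rw [Finset.sum_div]
                exact Finset.sum_congr rfl fun S _ => by rw [mul_one]
            _ = 1 := by
                rw [fordWeight_sum s.2 ⟨1, mem_lbl.mpr ⟨le_rfl, by omega⟩⟩, lbl_card]
                exact div_self hWne
      _ = 1 := by
          rw [Finset.sum_congr rfl fun s _ => mul_one (qF α m s), ih]

lemma sum_weight_cond (α : ℝ) {m : ℕ} (hm : 2 ≤ m) {s : Finset (Finset ℕ)}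
    (hs : IsLTree (lbl m) s) {i : ℕ} (hi : i ∈ lbl m) (a b : ℝ) :
    ∑ S ∈ s, fordWeight α S * (if S = {i} ∨ S = parentEdge s {i} then a else b)
      = ((m : ℝ) - α) * b + (a - b) := by
  have hiS : ({i} : Finset ℕ) ∈ s := hs.singleton_mem hi
  have hiA : ({i} : Finset ℕ) ≠ lbl m := by
    intro h
    have := lbl_card m
    rw [← h] at this
    simp at this
    omega
  obtain ⟨C, hCt, hCd, hPt⟩ := (hs.sib_exu hiS hiA).exists
  have hsib : sibling s ({i} : Finset ℕ) = C := hs.sibling_eq hiS hiA hCt hCd hPt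
  have hpar : parentEdge s ({i} : Finset ℕ) = {i} ∪ C := by rw [parentEdge, hsib]
  have hCne := hs.nonempty_of_mem hCt
  have hPcard : 2 ≤ ({i} ∪ C : Finset ℕ).card := by
    rw [Finset.card_union_of_disjoint (Finset.disjoint_iff_inter_eq_empty.mpr hCd)]
    have := Finset.card_pos.mpr hCne
    simp
    omega
  have hne : ({i} : Finset ℕ) ≠ {i} ∪ C := by
    intro h
    have : ({i} : Finset ℕ).card = ({i} ∪ C : Finset ℕ).card := by rw [← h]
    rw [Finset.card_singleton] at this
    omega
  have hwi : fordWeight α ({i} : Finset ℕ) = 1 - α := by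
    rw [fordWeight, if_neg]
    simp
  have hwP : fordWeight α ({i} ∪ C : Finset ℕ) = α := by
    rw [fordWeight, if_pos hPcard]
  calc ∑ S ∈ s, fordWeight α S * (if S = {i} ∨ S = parentEdge s {i} then a else b)
      = ∑ S ∈ s, (fordWeight α S * b
          + ((if S = ({i} : Finset ℕ) then (1 - α) * (a - b) else 0)
            + (if S = ({i} ∪ C : Finset ℕ) then α * (a - b) else 0))) := by
        refine Finset.sum_congr rfl fun S hSs => ?_
        rw [hpar]
        by_cases h1 : S = ({i} : Finset ℕ)
        · subst h1
          rw [if_pos (Or.inl rfl), if_pos rfl, if_neg hne, hwi]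
          ring
        · by_cases h2 : S = ({i} ∪ C : Finset ℕ)
          · subst h2
            rw [if_pos (Or.inr rfl), if_neg h1, if_pos rfl, hwP]
            ring
          · rw [if_neg (by push_neg; exact ⟨h1, h2⟩), if_neg h1, if_neg h2]
            ring
    _ = (∑ S ∈ s, fordWeight α S * b)
        + ((∑ S ∈ s, if S = ({i} : Finset ℕ) then (1 - α) * (a - b) else 0)
          + (∑ S ∈ s, if S = ({i} ∪ C : Finset ℕ) then α * (a - b) else 0)) := by
        rw [Finset.sum_add_distrib, Finset.sum_add_distrib]
    _ = ((m : ℝ) - α) * b + (a - b) := by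
        rw [← Finset.sum_mul, fordWeight_sum hs ⟨1, mem_lbl.mpr ⟨le_rfl, by omega⟩⟩, lbl_card,
          Finset.sum_ite_eq' s ({i} : Finset ℕ) (fun _ => (1 - α) * (a - b)), if_pos hiS,
          Finset.sum_ite_eq' s ({i} ∪ C : Finset ℕ) (fun _ => α * (a - b)), if_pos hPt]
        ring

def Fsum (α : ℝ) (m it : ℕ) : ℝ :=
  ∑ i ∈ lbl m, ∑ t : LTree (lbl m), qF α m t * (if tildeOf (lbl m) t.1 i = it then 1 else 0)

lemma Fsum_gt (α : ℝ) (m it : ℕ) (h : m < it) : Fsum α m it = 0 := by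
  apply Finset.sum_eq_zero
  intro i hi
  apply Finset.sum_eq_zero
  intro t _
  rw [if_neg, mul_zero]
  intro he
  have := tildeOf_le t.2 (fun x hx => (mem_lbl.mp hx).2) (mem_lbl.mp hi).2
  omega

set_option maxHeartbeats 1600000 in
lemma per_tree (α : ℝ) {m : ℕ} (hm : 2 ≤ m) (it : ℕ) (s : LTree (lbl m)) :
    ∑ S ∈ s.1, (fordWeight α S / ((m : ℝ) - α)) *
        (∑ i ∈ lbl (m + 1),
          (if tildeOf (lbl (m + 1)) (insertLeaf s.1 S (m + 1)) i = it then (1 : ℝ) else 0))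
      = (if m + 1 = it then ((m : ℝ) - α + (m : ℝ)) / ((m : ℝ) - α) else 0)
        + (((m : ℝ) - α - 1) / ((m : ℝ) - α)) *
          ∑ i ∈ lbl m, (if tildeOf (lbl m) s.1 i = it then (1 : ℝ) else 0) := by
  have hlt : ∀ x ∈ lbl m, x < m + 1 := fun x hx => lbl_lt_succ hx
  have hcard2 : 2 ≤ (lbl m).card := by rw [lbl_card]; omega
  have key : ∀ S ∈ s.1,
      (∑ i ∈ lbl (m + 1),
        (if tildeOf (lbl (m + 1)) (insertLeaf s.1 S (m + 1)) i = it then (1 : ℝ) else 0))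
      = (if m + 1 = it then (1 : ℝ) else 0)
        + ∑ i ∈ lbl m, (if S = {i} ∨ S = parentEdge s.1 {i}
            then (if m + 1 = it then (1 : ℝ) else 0)
            else (if tildeOf (lbl m) s.1 i = it then (1 : ℝ) else 0)) := by
    intro S hSs
    have hins : IsLTree (insert (m + 1) (lbl m)) (insertLeaf s.1 S (m + 1)) :=
      insertLeaf_isLTree s.2 hSs (succ_not_mem_lbl m)
    have h1 : tildeOf (insert (m + 1) (lbl m)) (insertLeaf s.1 S (m + 1)) (m + 1) = m + 1 :=
      tildeOf_eq_self hins (fun x hx => by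
        rcases Finset.mem_insert.mp hx with rfl | hx'
        · exact le_rfl
        · exact le_of_lt (lbl_lt_succ hx'))
    have h2 : ∀ i ∈ lbl m,
        (if tildeOf (insert (m + 1) (lbl m)) (insertLeaf s.1 S (m + 1)) i = it
          then (1 : ℝ) else 0)
        = (if S = {i} ∨ S = parentEdge s.1 {i} then (if m + 1 = it then (1 : ℝ) else 0)
            else (if tildeOf (lbl m) s.1 i = it then (1 : ℝ) else 0)) := by
      intro i hi
      have htl := tildeOf_insertLeaf s.2 hSs hlt hcard2 hi
      by_cases hc : S = {i} ∨ S = parentEdge s.1 {i}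
      · rw [htl, if_pos hc, if_pos hc]
      · rw [htl, if_neg hc, if_neg hc]
    rw [lbl_succ, Finset.sum_insert (succ_not_mem_lbl m), h1, Finset.sum_congr rfl h2]
  set a : ℝ := if m + 1 = it then (1 : ℝ) else 0 with ha_def
  set N : ℝ := ∑ i ∈ lbl m, (if tildeOf (lbl m) s.1 i = it then (1 : ℝ) else 0) with hN_def
  calc ∑ S ∈ s.1, (fordWeight α S / ((m : ℝ) - α)) *
        (∑ i ∈ lbl (m + 1),
          (if tildeOf (lbl (m + 1)) (insertLeaf s.1 S (m + 1)) i = it then (1 : ℝ) else 0))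
      = (∑ S ∈ s.1, fordWeight α S *
          (a + ∑ i ∈ lbl m, (if S = {i} ∨ S = parentEdge s.1 {i} then a
            else (if tildeOf (lbl m) s.1 i = it then (1 : ℝ) else 0)))) / ((m : ℝ) - α) := by
        rw [Finset.sum_div]
        refine Finset.sum_congr rfl fun S hSs => ?_
        rw [key S hSs, div_mul_eq_mul_div]
    _ = (((m : ℝ) - α) * a
          + ∑ i ∈ lbl m, (((m : ℝ) - α) *
              (if tildeOf (lbl m) s.1 i = it then (1 : ℝ) else 0)
            + (a - (if tildeOf (lbl m) s.1 i = it then (1 : ℝ) else 0)))) / ((m : ℝ) - α) := by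
        congr 1
        calc ∑ S ∈ s.1, fordWeight α S *
            (a + ∑ i ∈ lbl m, (if S = {i} ∨ S = parentEdge s.1 {i} then a
              else (if tildeOf (lbl m) s.1 i = it then (1 : ℝ) else 0)))
            = (∑ S ∈ s.1, fordWeight α S * a)
              + ∑ S ∈ s.1, ∑ i ∈ lbl m, fordWeight α S *
                  (if S = {i} ∨ S = parentEdge s.1 {i} then a
                    else (if tildeOf (lbl m) s.1 i = it then (1 : ℝ) else 0)) := by
              rw [← Finset.sum_add_distrib]
              refine Finset.sum_congr rfl fun S _ => ?_
              rw [mul_add, Finset.mul_sum]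
          _ = ((m : ℝ) - α) * a
              + ∑ i ∈ lbl m, ∑ S ∈ s.1, fordWeight α S *
                  (if S = {i} ∨ S = parentEdge s.1 {i} then a
                    else (if tildeOf (lbl m) s.1 i = it then (1 : ℝ) else 0)) := by
              rw [← Finset.sum_mul, fordWeight_sum s.2 ⟨1, mem_lbl.mpr ⟨le_rfl, by omega⟩⟩,
                lbl_card, Finset.sum_comm]
          _ = ((m : ℝ) - α) * a
              + ∑ i ∈ lbl m, (((m : ℝ) - α) *
                  (if tildeOf (lbl m) s.1 i = it then (1 : ℝ) else 0)
                + (a - (if tildeOf (lbl m) s.1 i = it then (1 : ℝ) else 0))) := by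
              congr 1
              exact Finset.sum_congr rfl fun i hi => sum_weight_cond α hm s.2 hi a _
    _ = (if m + 1 = it then ((m : ℝ) - α + (m : ℝ)) / ((m : ℝ) - α) else 0)
        + (((m : ℝ) - α - 1) / ((m : ℝ) - α)) * N := by
        rw [Finset.sum_add_distrib, ← Finset.mul_sum, ← hN_def, Finset.sum_sub_distrib,
          Finset.sum_const, lbl_card, ← hN_def, nsmul_eq_mul]
        have hWne : ((m : ℝ) - α) ≠ 0 ∨ True := Or.inr trivial
        by_cases hit : m + 1 = it
        · rw [if_pos hit, ha_def, if_pos hit]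
          field_simp
          ring
        · rw [if_neg hit, ha_def, if_neg hit]
          field_simp
          ring

lemma Fsum_step (α : ℝ) (hα1 : α < 1) {m : ℕ} (hm : 2 ≤ m) (it : ℕ) :
    Fsum α (m + 1) it
      = (if m + 1 = it then ((m : ℝ) - α + (m : ℝ)) / ((m : ℝ) - α) else 0)
        + (((m : ℝ) - α - 1) / ((m : ℝ) - α)) * Fsum α m it := by
  set g : Finset (Finset ℕ) → ℝ :=
    fun u => ∑ i ∈ lbl (m + 1), (if tildeOf (lbl (m + 1)) u i = it then (1 : ℝ) else 0)
    with hg_def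
  have hFswap : Fsum α m it = ∑ s : LTree (lbl m), qF α m s *
      (∑ i ∈ lbl m, (if tildeOf (lbl m) s.1 i = it then (1 : ℝ) else 0)) := by
    rw [Fsum, Finset.sum_comm]
    exact Finset.sum_congr rfl fun s _ => by rw [Finset.mul_sum]
  have step1 : Fsum α (m + 1) it = ∑ t : LTree (lbl (m + 1)), qF α (m + 1) t * g t.1 := by
    rw [Fsum, Finset.sum_comm]
    exact Finset.sum_congr rfl fun t _ => by rw [hg_def, Finset.mul_sum]
  rw [step1]
  calc ∑ t : LTree (lbl (m + 1)), qF α (m + 1) t * g t.1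
      = ∑ t : LTree (lbl (m + 1)), ∑ s : LTree (lbl m),
          qF α m s * (growStepF α m s.1 t.1 * g t.1) := by
        refine Finset.sum_congr rfl fun t _ => ?_
        rw [qF_succ α hm t, Finset.sum_mul]
        exact Finset.sum_congr rfl fun s _ => by rw [mul_assoc]
    _ = ∑ s : LTree (lbl m), qF α m s *
          ∑ t : LTree (lbl (m + 1)), growStepF α m s.1 t.1 * g t.1 := by
        rw [Finset.sum_comm]
        exact Finset.sum_congr rfl fun s _ => by rw [Finset.mul_sum]
    _ = ∑ s : LTree (lbl m), qF α m s *
          ((if m + 1 = it then ((m : ℝ) - α + (m : ℝ)) / ((m : ℝ) - α) else 0)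
            + (((m : ℝ) - α - 1) / ((m : ℝ) - α)) *
              ∑ i ∈ lbl m, (if tildeOf (lbl m) s.1 i = it then (1 : ℝ) else 0)) := by
        refine Finset.sum_congr rfl fun s _ => ?_
        rw [growStep_apply α (by omega) s.2 g]
        congr 1
        exact per_tree α hm it s
    _ = (if m + 1 = it then ((m : ℝ) - α + (m : ℝ)) / ((m : ℝ) - α) else 0)
        + (((m : ℝ) - α - 1) / ((m : ℝ) - α)) * Fsum α m it := by
        rw [Finset.sum_congr rfl (fun s (_ : s ∈ Finset.univ) =>
          mul_add (qF α m s) _ _), Finset.sum_add_distrib]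
        congr 1
        · rw [← Finset.sum_mul, qF_total α hα1 m hm, one_mul]
        · rw [hFswap, Finset.mul_sum]
          exact Finset.sum_congr rfl fun s _ => by ring

lemma Fsum_closed (α : ℝ) (hα1 : α < 1) :
    ∀ m, 2 ≤ m →
      (∀ it, 3 ≤ it → it ≤ m → Fsum α m it = (2 * (it : ℝ) - 2 - α) / ((m : ℝ) - 1 - α))
        ∧ Fsum α m 2 = 2 * (1 - α) / ((m : ℝ) - 1 - α) := by
  intro m hm
  induction m, hm using Nat.le_induction with
  | base =>
    have hbase : ∀ it : ℕ, Fsum α 2 it = if it = 2 then 2 else 0 := by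
      intro it
      have hsum2 : ∀ f : ℕ → ℝ, ∑ i ∈ lbl 2, f i = f 1 + f 2 := by
        intro f
        rw [lbl_two, show ({1, 2} : Finset ℕ) = insert 1 {2} from rfl,
          Finset.sum_insert (by decide), Finset.sum_singleton]
      rw [Fsum, hsum2]
      rw [sum_LTree_two (fun t => qF α 2 t *
          (if tildeOf (lbl 2) t.1 1 = it then (1 : ℝ) else 0)),
        sum_LTree_two (fun t => qF α 2 t *
          (if tildeOf (lbl 2) t.1 2 = it then (1 : ℝ) else 0))]
      have hq : qF α 2 (⟨t2, isLTree_t2⟩ : LTree (lbl 2)) = 1 := rfl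
      rw [hq, one_mul, one_mul]
      show (if tildeOf (lbl 2) t2 1 = it then (1 : ℝ) else 0)
          + (if tildeOf (lbl 2) t2 2 = it then (1 : ℝ) else 0) = if it = 2 then 2 else 0
      rw [tilde_t2_one, tilde_t2_two]
      by_cases h : it = 2
      · rw [if_pos h.symm, if_pos h]
        norm_num
      · rw [if_neg (fun he => h he.symm), if_neg h]
        norm_num
    constructor
    · intro it h3 h2
      omega
    · rw [hbase 2, if_pos rfl]
      have h1 : (1 : ℝ) - α ≠ 0 := by linarith
      rw [show ((2 : ℕ) : ℝ) - 1 - α = 1 - α by push_cast; ring]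
      field_simp
  | succ m hm ih =>
    have hmR : (2 : ℝ) ≤ (m : ℝ) := by exact_mod_cast hm
    have hWne : ((m : ℝ) - α) ≠ 0 := by linarith
    have hW1ne : ((m : ℝ) - 1 - α) ≠ 0 := by linarith
    have hcast : ((m : ℕ) + 1 : ℕ) = m + 1 := rfl
    constructor
    · intro it h3 hle
      by_cases hit : it = m + 1
      · subst hit
        rw [Fsum_step α hα1 hm, if_pos rfl, Fsum_gt α m (m + 1) (by omega), mul_zero,
          add_zero]
        push_cast
        ring
      · have hitm : it ≤ m := by omega
        rw [Fsum_step α hα1 hm, if_neg (fun he => hit he.symm), (ih.1) it h3 hitm, zero_add]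
        push_cast
        rw [div_mul_div_comm, div_eq_div_iff (mul_ne_zero hWne hW1ne) (by linarith)]
        ring
    · rw [Fsum_step α hα1 hm, if_neg (by omega), ih.2, zero_add]
      push_cast
      rw [div_mul_div_comm, div_eq_div_iff (mul_ne_zero hWne hW1ne) (by linarith)]
      ring

end Helpers

/-- **Corollary 2.7.** The distribution of the label `Ĩ` removed in the down-move of
the alpha chain started from `T_n ~ q_{n,α}` with an independent uniform leaf choice,
together with its specialization at `α = 1/2`. -/
theorem cor_resampdist (n : ℕ) (hn : 3 ≤ n) (α : ℝ) (hα0 : 0 < α) (hα1 : α < 1) :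
    (∀ it : ℕ, 3 ≤ it → it ≤ n →
      (1 / (n : ℝ)) * ∑ i ∈ lbl n, ∑ t : LTree (lbl n),
          qF α n t * (if tildeOf (lbl n) t.1 i = it then 1 else 0)
        = (2 * (it : ℝ) - 2 - α) / ((n : ℝ) * ((n : ℝ) - 1 - α))) ∧
    ((1 / (n : ℝ)) * ∑ i ∈ lbl n, ∑ t : LTree (lbl n),
          qF α n t * (if tildeOf (lbl n) t.1 i = 2 then 1 else 0)
        = 2 * (1 - α) / ((n : ℝ) * ((n : ℝ) - 1 - α))) ∧
    (∀ it : ℕ, 3 ≤ it → it ≤ n →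
      (1 / (n : ℝ)) * ∑ i ∈ lbl n, ∑ t : LTree (lbl n),
          qF (1 / 2) n t * (if tildeOf (lbl n) t.1 i = it then 1 else 0)
        = (4 * (it : ℝ) - 5) / ((n : ℝ) * (2 * (n : ℝ) - 3))) ∧
    ((1 / (n : ℝ)) * ∑ i ∈ lbl n, ∑ t : LTree (lbl n),
          qF (1 / 2) n t * (if tildeOf (lbl n) t.1 i = 2 then 1 else 0)
        = 2 / ((n : ℝ) * (2 * (n : ℝ) - 3))) := by
  have hnR : (3 : ℝ) ≤ (n : ℝ) := by exact_mod_cast hn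
  have hnne : (n : ℝ) ≠ 0 := by linarith
  have key : ∀ (β : ℝ), β < 1 →
      (∀ it : ℕ, 3 ≤ it → it ≤ n →
        (1 / (n : ℝ)) * ∑ i ∈ lbl n, ∑ t : LTree (lbl n),
          qF β n t * (if tildeOf (lbl n) t.1 i = it then 1 else 0)
          = (2 * (it : ℝ) - 2 - β) / ((n : ℝ) * ((n : ℝ) - 1 - β)))
      ∧ ((1 / (n : ℝ)) * ∑ i ∈ lbl n, ∑ t : LTree (lbl n),
          qF β n t * (if tildeOf (lbl n) t.1 i = 2 then 1 else 0)
          = 2 * (1 - β) / ((n : ℝ) * ((n : ℝ) - 1 - β))) := by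
    intro β hβ1
    have hn2 : 2 ≤ n := by omega
    have hclosed := Fsum_closed β hβ1 n hn2
    have hdne : (n : ℝ) - 1 - β ≠ 0 := by linarith
    constructor
    · intro it h3 hle
      have hF : (∑ i ∈ lbl n, ∑ t : LTree (lbl n),
          qF β n t * (if tildeOf (lbl n) t.1 i = it then 1 else 0)) = Fsum β n it := rfl
      rw [hF, hclosed.1 it h3 hle]
      field_simp
    · have hF : (∑ i ∈ lbl n, ∑ t : LTree (lbl n),
          qF β n t * (if tildeOf (lbl n) t.1 i = 2 then 1 else 0)) = Fsum β n 2 := rfl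
      rw [hF, hclosed.2]
      field_simp
  have key2 := key (1 / 2) (by norm_num)
  have h2n3 : 2 * (n : ℝ) - 3 ≠ 0 := by linarith
  have hd2 : (n : ℝ) - 1 - 1 / 2 ≠ 0 := by linarith
  refine ⟨(key α hα1).1, (key α hα1).2, ?_, ?_⟩
  · intro it h3 hle
    rw [key2.1 it h3 hle]
    rw [div_eq_div_iff (by positivity) ?hne2]
    case hne2 =>
      intro h
      rcases mul_eq_zero.mp h with h' | h'
      · exact hnne h'
      · exact h2n3 h'
    ring
  · rw [key2.2]
    rw [div_eq_div_iff (by positivity) ?hne2]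
    case hne2 =>
      intro h
      rcases mul_eq_zero.mp h with h' | h'
      · exact hnne h'
      · exact h2n3 h'
    ring
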